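/- arXiv:math/0509329 — 10 statements merged into one kernel-verified Lean document; each statement's English description precedes it below -/
import Mathlib

section
/- Let H, K, G be Hilbert spaces, A : H → G and B : K → G bounded linear operators with R(B) ⊆ R(A). Then for every closed subspace M of H such that H = N(A) ⊕ M (direct, not necessarily orthogonal, sum), there exists a unique bounded operator C : K → H with AC = B and R(C) ⊆ M; moreover N(C) = N(B). -/
theorem stmt_0
    {H K G : Type*}
    [NormedAddCommGroup H] [InnerProductSpace ℂ H] [CompleteSpace H]
    [NormedAddCommGroup K] [InnerProductSpace ℂ K] [CompleteSpace K]
    [NormedAddCommGroup G] [InnerProductSpace ℂ G] [CompleteSpace G]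
    (A : H →L[ℂ] G) (B : K →L[ℂ] G)
    (hrange : LinearMap.range (B : K →ₗ[ℂ] G) ≤ LinearMap.range (A : H →ₗ[ℂ] G))
    (M : Submodule ℂ H) (hM : IsClosed (M : Set H))
    (hcompl : IsCompl (LinearMap.ker (A : H →ₗ[ℂ] G)) M) :
    ∃ C : K →L[ℂ] H,
      (A ∘L C = B ∧ LinearMap.range (C : K →ₗ[ℂ] H) ≤ M ∧ LinearMap.ker (C : K →ₗ[ℂ] H) = LinearMap.ker (B : K →ₗ[ℂ] G)) ∧
      ∀ C' : K →L[ℂ] H, A ∘L C' = B → LinearMap.range (C' : K →ₗ[ℂ] H) ≤ M → C' = C := by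
  classical
  -- projection onto M along ker A
  set π : H →ₗ[ℂ] M := Submodule.projectionOnto M (LinearMap.ker (A : H →ₗ[ℂ] G)) hcompl.symm with hπ
  have hπwd : ∀ h h' : H, A h = A h' → π h = π h' := by
    intro h h' hAh
    have hks : h - h' ∈ LinearMap.ker (A : H →ₗ[ℂ] G) := by
      simp [LinearMap.mem_ker, map_sub, hAh]
    have := Submodule.projectionOnto_apply_of_mem_right hcompl.symm hks
    rw [map_sub, sub_eq_zero] at this
    exact this
  have hAπ : ∀ h : H, A ((π h : M) : H) = A h := by
    intro h
    have hmem : h - ((π h : M) : H) ∈ LinearMap.ker (A : H →ₗ[ℂ] G) := by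
      rw [← Submodule.projectionOnto_apply_eq_zero_iff hcompl.symm]
      simp [hπ, map_sub, Submodule.projectionOnto_projection, sub_eq_zero,
        Submodule.projectionOnto_apply_left]
    have h0 : A h - A ((π h : M) : H) = 0 := by
      simpa [map_sub] using hmem
    exact (sub_eq_zero.mp h0).symm
  have hex : ∀ k : K, ∃ h : H, A h = B k := fun k => hrange ⟨k, rfl⟩
  choose f hf using hex
  -- the underlying linear map
  let C₀ : K →ₗ[ℂ] H :=
    { toFun := fun k => ((π (f k) : M) : H)
      map_add' := by
        intro k k'
        have h1 : π (f (k + k')) = π (f k + f k') :=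
          hπwd _ _ (by simp [hf, map_add])
        show ((π (f (k + k')) : M) : H) = ((π (f k) : M) : H) + ((π (f k') : M) : H)
        rw [h1, map_add, Submodule.coe_add]
      map_smul' := by
        intro c k
        have h1 : π (f (c • k)) = π (c • f k) :=
          hπwd _ _ (by simp [hf, map_smul])
        show ((π (f (c • k)) : M) : H) = c • ((π (f k) : M) : H)
        rw [h1, map_smul, Submodule.coe_smul] }
  have hC₀mem : ∀ k, C₀ k ∈ M := fun k => (π (f k)).2
  have hAC₀ : ∀ k, A (C₀ k) = B k := by
    intro k
    show A ((π (f k) : M) : H) = B k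
    rw [hAπ, hf]
  -- unique element of M mapping to B k
  have huniq : ∀ (k : K) (h : H), h ∈ M → A h = B k → h = C₀ k := by
    intro k h hmem hA
    have hd : h - C₀ k ∈ LinearMap.ker (A : H →ₗ[ℂ] G) ⊓ M := by
      constructor
      · simp [LinearMap.mem_ker, map_sub, hA, hAC₀ k]
      · exact M.sub_mem hmem (hC₀mem k)
    rw [hcompl.inf_eq_bot, Submodule.mem_bot] at hd
    exact sub_eq_zero.mp hd
  -- graph is closed
  have hgraph : (C₀.graph : Set (K × H)) =
      {p : K × H | p.2 ∈ M} ∩ {p : K × H | A p.2 - B p.1 = 0} := by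
    ext ⟨k, h⟩
    simp only [Set.mem_inter_iff, Set.mem_setOf_eq, SetLike.mem_coe, LinearMap.mem_graph_iff]
    constructor
    · rintro rfl
      exact ⟨hC₀mem k, by rw [hAC₀ k, sub_self]⟩
    · rintro ⟨hmem, hA⟩
      exact huniq k h hmem (sub_eq_zero.mp hA)
  have hclosed : IsClosed (C₀.graph : Set (K × H)) := by
    rw [hgraph]
    refine (hM.preimage continuous_snd).inter (isClosed_eq ?_ continuous_const)
    exact ((A.continuous.comp continuous_snd).sub (B.continuous.comp continuous_fst))
  let C : K →L[ℂ] H := ContinuousLinearMap.ofIsClosedGraph hclosed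
  have hCapp : ∀ k, C k = C₀ k := fun _ => rfl
  refine ⟨C, ⟨?_, ?_, ?_⟩, ?_⟩
  · ext k
    simp [hCapp, hAC₀ k]
  · rintro h ⟨k, rfl⟩
    exact hC₀mem k
  · ext k
    simp only [LinearMap.mem_ker, ContinuousLinearMap.coe_coe]
    constructor
    · intro h0
      rw [← hAC₀ k, ← hCapp, h0, map_zero]
    · intro h0
      rw [hCapp]
      exact ((huniq k 0 M.zero_mem (by simp [h0])).symm)
  · intro C' hAC' hrC'
    ext k
    rw [hCapp]
    apply huniq
    · exact hrC' ⟨k, rfl⟩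
    · exact DFunLike.congr_fun hAC' k
end

section
/- Let H, K, G be Hilbert spaces and A ∈ L(H,G), B ∈ L(K,G). The following are equivalent: (i) the equation AX = B has a bounded solution X ∈ L(K,H); (ii) R(B) ⊆ R(A); (iii) there exists λ > 0 such that B B* ≤ λ A A*. In this case there is a unique solution D with R(D) ⊆ closure(R(A*)), and ‖D‖² = inf{λ > 0 : B B* ≤ λ A A*}. -/
open ContinuousLinearMap

set_option linter.unusedSectionVars false

section DouglasAux

variable {H K G : Type*}
    [NormedAddCommGroup H] [InnerProductSpace ℂ H] [CompleteSpace H]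
    [NormedAddCommGroup K] [InnerProductSpace ℂ K] [CompleteSpace K]
    [NormedAddCommGroup G] [InnerProductSpace ℂ G] [CompleteSpace G]

set_option maxHeartbeats 1000000 in
/-- Core construction: from the norm inequality `‖B† g‖ ≤ c ‖A† g‖`, construct the reduced
solution of `A X = B`. -/
lemma douglas_construct (A : H →L[ℂ] G) (B : K →L[ℂ] G) {c : ℝ} (hc : 0 ≤ c)
    (h : ∀ g : G, ‖adjoint B g‖ ≤ c * ‖adjoint A g‖) :
    ∃ X : K →L[ℂ] H, A ∘L X = B ∧
      LinearMap.range (X : K →ₗ[ℂ] H) ≤ (LinearMap.range (adjoint A : G →ₗ[ℂ] H)).topologicalClosure ∧ ‖X‖ ≤ c := by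
  classical
  set f : G →ₗ[ℂ] H := (adjoint A).toLinearMap with hf
  set g' : G →ₗ[ℂ] K := (adjoint B).toLinearMap with hg'
  have hker : LinearMap.ker f ≤ LinearMap.ker g' := by
    intro x hx
    have hx0 : adjoint A x = 0 := hx
    have := h x
    rw [hx0] at this
    simp only [norm_zero, mul_zero] at this
    exact norm_le_zero_iff.mp this
  -- linear map on the range of `adjoint A`
  set T₀ : LinearMap.range f →ₗ[ℂ] K :=
    ((LinearMap.ker f).liftQ g' hker) ∘ₗ f.quotKerEquivRange.symm.toLinearMap with hT₀
  have hT₀apply : ∀ (x : G) (hx : f x ∈ LinearMap.range f),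
      T₀ ⟨f x, hx⟩ = adjoint B x := by
    intro x hx
    have h1 : f.quotKerEquivRange (Submodule.Quotient.mk x) = ⟨f x, hx⟩ := by
      apply Subtype.ext
      exact f.quotKerEquivRange_apply_mk x
    have h2 : f.quotKerEquivRange.symm ⟨f x, hx⟩ = Submodule.Quotient.mk x := by
      rw [← h1, LinearEquiv.symm_apply_apply]
    simp only [hT₀, LinearMap.comp_apply, LinearEquiv.coe_toLinearMap, h2]
    rfl
  have hT₀bound : ∀ y : LinearMap.range f, ‖T₀ y‖ ≤ c * ‖y‖ := by
    rintro ⟨y, x, rfl⟩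
    rw [hT₀apply x ⟨x, rfl⟩]
    exact h x
  set T : LinearMap.range f →L[ℂ] K := T₀.mkContinuous c hT₀bound with hT
  have hTnorm : ‖T‖ ≤ c := T₀.mkContinuous_norm_le hc hT₀bound
  set V : Submodule ℂ H := (LinearMap.range f).topologicalClosure with hV
  haveI : CompleteSpace V :=
    (Submodule.isClosed_topologicalClosure _).completeSpace_coe
  -- the inclusion of `range f` into `V`
  have hle : LinearMap.range f ≤ V := Submodule.le_topologicalClosure _
  set e₀ : LinearMap.range f →ₗ[ℂ] V := Submodule.inclusion hle with he₀
  have he₀bound : ∀ x : LinearMap.range f, ‖e₀ x‖ ≤ 1 * ‖x‖ := by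
    intro x; simp only [one_mul]
    rfl
  set e : LinearMap.range f →L[ℂ] V := e₀.mkContinuous 1 he₀bound with he
  have h_e : ∀ x, ‖x‖ ≤ ((1 : NNReal) : ℝ) * ‖e x‖ := by
    intro x; simp only [NNReal.coe_one, one_mul]; rfl
  have h_dense : DenseRange e := by
    rw [denseRange_iff_closure_range, Set.eq_univ_iff_forall]
    intro y
    rw [closure_subtype]
    have himg : ((↑) '' Set.range e : Set H) = ((LinearMap.range f : Submodule ℂ H) : Set H) := by
      ext z
      constructor
      · rintro ⟨w, ⟨u, rfl⟩, rfl⟩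
        exact u.2
      · rintro hz
        exact ⟨e ⟨z, hz⟩, ⟨⟨z, hz⟩, rfl⟩, rfl⟩
    rw [himg]
    have hy2 : (y : H) ∈ (LinearMap.range f).topologicalClosure := y.2
    rw [← Submodule.topologicalClosure_coe]
    exact hy2
  set Emap : V →L[ℂ] K := T.extend e with hEmap
  have hEnorm : ‖Emap‖ ≤ ((1 : NNReal) : ℝ) * ‖T‖ := T.opNorm_extend_le h_dense h_e
  set P : H →L[ℂ] V := Submodule.orthogonalProjectionOnto V with hP
  set S : H →L[ℂ] K := Emap ∘L P with hS
  have hSA : S ∘L adjoint A = adjoint B := by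
    ext x
    have hmem : adjoint A x ∈ V := hle ⟨x, rfl⟩
    have hPx : P (adjoint A x) = ⟨adjoint A x, hmem⟩ :=
      Submodule.orthogonalProjectionOnto_mem_subspace_eq_self (⟨adjoint A x, hmem⟩ : V)
    have hee : (⟨adjoint A x, hmem⟩ : V) = e ⟨adjoint A x, ⟨x, rfl⟩⟩ := by
      apply Subtype.ext; rfl
    calc (S ∘L adjoint A) x = Emap (P (adjoint A x)) := rfl
      _ = Emap (e ⟨adjoint A x, ⟨x, rfl⟩⟩) := by rw [hPx, hee]
      _ = T ⟨adjoint A x, ⟨x, rfl⟩⟩ := ContinuousLinearMap.extend_eq _ h_dense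
          (ContinuousLinearMap.isUniformEmbedding_of_bound _ h_e).isUniformInducing _
      _ = adjoint B x := hT₀apply x ⟨x, rfl⟩
  have hVeq : (LinearMap.range (adjoint A : G →ₗ[ℂ] H)).topologicalClosure = V := rfl
  refine ⟨adjoint S, ?_, ?_, ?_⟩
  · have h2 := congrArg ContinuousLinearMap.adjoint hSA
    rw [adjoint_comp, adjoint_adjoint, adjoint_adjoint] at h2
    exact h2
  · rintro x ⟨k, rfl⟩
    have hSadj : adjoint S = V.subtypeL ∘L adjoint Emap := by
      rw [hS, adjoint_comp, hP, Submodule.adjoint_orthogonalProjectionOnto]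
    rw [hSadj]
    exact Submodule.coe_mem _
  · have h1 : ‖Emap‖ ≤ ‖T‖ := by simpa using hEnorm
    have h2 : ‖P‖ ≤ 1 := Submodule.orthogonalProjectionOnto_norm_le V
    calc ‖adjoint S‖ = ‖S‖ := adjoint.norm_map S
      _ ≤ ‖Emap‖ * ‖P‖ := opNorm_comp_le _ _
      _ ≤ ‖T‖ * 1 := mul_le_mul h1 h2 (norm_nonneg P) (norm_nonneg T)
      _ = ‖T‖ := mul_one _
      _ ≤ c := hTnorm

set_option maxHeartbeats 1000000 in
/-- Closed graph theorem construction: range inclusion gives a bounded solution. -/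
lemma douglas_range (A : H →L[ℂ] G) (B : K →L[ℂ] G)
    (hr : LinearMap.range (B : K →ₗ[ℂ] G) ≤ LinearMap.range (A : H →ₗ[ℂ] G)) :
    ∃ X : K →L[ℂ] H, A ∘L X = B := by
  classical
  set W : Submodule ℂ H := (LinearMap.ker (A : H →ₗ[ℂ] G))ᗮ with hW
  haveI : CompleteSpace W := (Submodule.isClosed_orthogonal _).completeSpace_coe
  set A₁ : W →ₗ[ℂ] G := A.toLinearMap ∘ₗ W.subtype with hA₁
  have hinj : Function.Injective A₁ := by
    rw [← LinearMap.ker_eq_bot, LinearMap.ker_eq_bot']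
    intro m hm
    have h1 : (m : H) ∈ LinearMap.ker (A : H →ₗ[ℂ] G) := hm
    have h2 : (m : H) ∈ W := m.2
    have h3 : (m : H) = 0 := by
      have := (Submodule.orthogonal_disjoint (LinearMap.ker (A : H →ₗ[ℂ] G))).le_bot ⟨h1, h2⟩
      simpa using this
    exact Subtype.ext h3
  have hrange : ∀ k : K, B k ∈ LinearMap.range A₁ := by
    intro k
    obtain ⟨h0, hh0⟩ := hr ⟨k, rfl⟩
    set w : W := Submodule.orthogonalProjectionOnto W h0 with hw
    refine ⟨w, ?_⟩
    have hsub : h0 - (w : H) ∈ Wᗮ := Submodule.sub_starProjection_mem_orthogonal h0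
    have hWbot : Wᗮ = LinearMap.ker (A : H →ₗ[ℂ] G) := by
      rw [hW, Submodule.orthogonal_orthogonal]
    have hker : A (h0 - (w : H)) = 0 := by
      rw [hWbot] at hsub
      exact hsub
    have h5 : A₁ w = A (w : H) := rfl
    have h4 : A h0 - A (w : H) = 0 := by rw [← map_sub]; exact hker
    rw [h5, show B k = A h0 from hh0.symm]
    exact (sub_eq_zero.mp h4).symm
  set eqv := LinearEquiv.ofInjective A₁ hinj with heqv
  set X₀ : K →ₗ[ℂ] H := W.subtype ∘ₗ (eqv.symm.toLinearMap ∘ₗ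
      (B.toLinearMap.codRestrict (LinearMap.range A₁) hrange)) with hX₀
  have hX₀mem : ∀ k, X₀ k ∈ W := fun k => Submodule.coe_mem _
  have hX₀A : ∀ k, A (X₀ k) = B k := by
    intro k
    have h1 : X₀ k = ((eqv.symm ⟨B k, hrange k⟩ : W) : H) := rfl
    have h2 : A ((eqv.symm ⟨B k, hrange k⟩ : W) : H) = A₁ (eqv.symm ⟨B k, hrange k⟩) := rfl
    have h3 : A₁ (eqv.symm ⟨B k, hrange k⟩) =
        ((eqv (eqv.symm ⟨B k, hrange k⟩) : LinearMap.range A₁) : G) := by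
      rw [heqv]
      exact (LinearEquiv.ofInjective_apply A₁ (h := hinj) _).symm
    rw [h1, h2, h3, LinearEquiv.apply_symm_apply]
  have hg : ∀ (u : ℕ → K) (x : K) (y : H), Filter.Tendsto u Filter.atTop (nhds x) →
      Filter.Tendsto (X₀ ∘ u) Filter.atTop (nhds y) → y = X₀ x := by
    intro u x y hu hXu
    have hAy : Filter.Tendsto (fun n => A (X₀ (u n))) Filter.atTop (nhds (A y)) :=
      (A.continuous.tendsto y).comp hXu
    have hBx : Filter.Tendsto (fun n => A (X₀ (u n))) Filter.atTop (nhds (B x)) := by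
      have : (fun n => A (X₀ (u n))) = fun n => B (u n) := by
        funext n; exact hX₀A (u n)
      rw [this]
      exact (B.continuous.tendsto x).comp hu
    have hABx : A y = B x := tendsto_nhds_unique hAy hBx
    have hyW : y ∈ W := by
      refine (Submodule.isClosed_orthogonal _).mem_of_tendsto hXu ?_
      exact Filter.Eventually.of_forall fun n => hX₀mem (u n)
    have hdiff : y - X₀ x ∈ W := W.sub_mem hyW (hX₀mem x)
    have hdker : y - X₀ x ∈ LinearMap.ker (A : H →ₗ[ℂ] G) := by
      have : A (y - X₀ x) = 0 := by
        rw [map_sub, hABx, hX₀A x, sub_self]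
      exact this
    have h0 : y - X₀ x = 0 := by
      have := (Submodule.orthogonal_disjoint (LinearMap.ker (A : H →ₗ[ℂ] G))).le_bot ⟨hdker, hdiff⟩
      simpa using this
    exact sub_eq_zero.mp h0
  refine ⟨ContinuousLinearMap.ofSeqClosedGraph hg, ?_⟩
  ext k
  exact hX₀A k

lemma douglas_pos_iff (A : H →L[ℂ] G) (B : K →L[ℂ] G) (lam : ℝ) :
    ((lam : ℂ) • (A ∘L adjoint A) - B ∘L adjoint B).IsPositive ↔
      ∀ g : G, ‖adjoint B g‖ ^ 2 ≤ lam * ‖adjoint A g‖ ^ 2 := by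
  have key : ∀ g : G, ((lam : ℂ) • (A ∘L adjoint A) - B ∘L adjoint B).reApplyInnerSelf g
      = lam * ‖adjoint A g‖ ^ 2 - ‖adjoint B g‖ ^ 2 := by
    intro g
    have hA : ‖adjoint A g‖ ^ 2 = RCLike.re (inner ℂ ((A ∘L adjoint A) g) g) := by
      have := ContinuousLinearMap.apply_norm_sq_eq_inner_adjoint_left (adjoint A) g
      rwa [adjoint_adjoint] at this
    have hB : ‖adjoint B g‖ ^ 2 = RCLike.re (inner ℂ ((B ∘L adjoint B) g) g) := by
      have := ContinuousLinearMap.apply_norm_sq_eq_inner_adjoint_left (adjoint B) g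
      rwa [adjoint_adjoint] at this
    rw [ContinuousLinearMap.reApplyInnerSelf]
    rw [ContinuousLinearMap.sub_apply, ContinuousLinearMap.smul_apply, inner_sub_left,
      inner_smul_left, map_sub, hA, hB]
    simp [Complex.ofReal_re, Complex.ofReal_im]
  constructor
  · intro hpos g
    have := hpos.2 g
    rw [key g] at this
    linarith
  · intro hineq
    constructor
    · rw [← ContinuousLinearMap.isSelfAdjoint_iff_isSymmetric]
      have h1 : IsSelfAdjoint (A ∘L adjoint A) := by
        rw [ContinuousLinearMap.isSelfAdjoint_iff']
        rw [adjoint_comp, adjoint_adjoint]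
      have h2 : IsSelfAdjoint (B ∘L adjoint B) := by
        rw [ContinuousLinearMap.isSelfAdjoint_iff']
        rw [adjoint_comp, adjoint_adjoint]
      have h3 : IsSelfAdjoint ((lam : ℂ) • (A ∘L adjoint A)) := by
        refine IsSelfAdjoint.smul ?_ h1
        show star (lam : ℂ) = (lam : ℂ)
        rw [Complex.star_def, Complex.conj_ofReal]
      exact ContinuousLinearMap.isSelfAdjoint_iff'.mp (h3.sub h2)
    · intro g
      rw [key g]
      have := hineq g
      linarith

lemma douglas_unique (A : H →L[ℂ] G) {D₁ D₂ : K →L[ℂ] H}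
    (hA : ∀ k, A (D₁ k) = A (D₂ k))
    (h1 : LinearMap.range (D₁ : K →ₗ[ℂ] H) ≤ (LinearMap.range (adjoint A : G →ₗ[ℂ] H)).topologicalClosure)
    (h2 : LinearMap.range (D₂ : K →ₗ[ℂ] H) ≤ (LinearMap.range (adjoint A : G →ₗ[ℂ] H)).topologicalClosure) :
    D₁ = D₂ := by
  ext k
  set V : Submodule ℂ H := (LinearMap.range (adjoint A : G →ₗ[ℂ] H)).topologicalClosure with hV
  have hd : D₁ k - D₂ k ∈ V := V.sub_mem (h1 ⟨k, rfl⟩) (h2 ⟨k, rfl⟩)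
  have hker : A (D₁ k - D₂ k) = 0 := by rw [map_sub, hA k, sub_self]
  have hortho : D₁ k - D₂ k ∈ (LinearMap.range (adjoint A : G →ₗ[ℂ] H))ᗮ := by
    rw [Submodule.mem_orthogonal]
    rintro u ⟨g, rfl⟩
    rw [ContinuousLinearMap.coe_coe, ContinuousLinearMap.adjoint_inner_left, hker, inner_zero_right]
  haveI : CompleteSpace ((LinearMap.range (adjoint A : G →ₗ[ℂ] H))ᗮ : Submodule ℂ H) :=
    (Submodule.isClosed_orthogonal _).completeSpace_coe
  haveI : Submodule.HasOrthogonalProjection ((LinearMap.range (adjoint A : G →ₗ[ℂ] H))ᗮ : Submodule ℂ H) :=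
    Submodule.HasOrthogonalProjection.ofCompleteSpace _
  have hVbot : Vᗮ = (LinearMap.range (adjoint A : G →ₗ[ℂ] H))ᗮ := by
    rw [hV, ← Submodule.orthogonal_orthogonal_eq_closure,
      Submodule.orthogonal_orthogonal]
  have hd2 : D₁ k - D₂ k ∈ Vᗮ := by rw [hVbot]; exact hortho
  have : D₁ k - D₂ k = 0 := by
    have := (Submodule.orthogonal_disjoint V).le_bot ⟨hd, hd2⟩
    simpa using this
  exact sub_eq_zero.mp this

lemma douglas_sol_bound (A : H →L[ℂ] G) (B : K →L[ℂ] G) (D : K →L[ℂ] H)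
    (hD : A ∘L D = B) : ∀ g : G, ‖adjoint B g‖ ≤ ‖D‖ * ‖adjoint A g‖ := by
  intro g
  rw [← hD, adjoint_comp]
  calc ‖(adjoint D ∘L adjoint A) g‖ = ‖adjoint D (adjoint A g)‖ := rfl
    _ ≤ ‖adjoint D‖ * ‖adjoint A g‖ := ContinuousLinearMap.le_opNorm _ _
    _ = ‖D‖ * ‖adjoint A g‖ := by rw [adjoint.norm_map]

lemma douglas_sqrt_bound {lam a b : ℝ} (hlam : 0 ≤ lam) (ha : 0 ≤ a) (hb : 0 ≤ b)
    (h : a ^ 2 ≤ lam * b ^ 2) : a ≤ Real.sqrt lam * b := by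
  rw [← Real.sqrt_sq ha]
  calc Real.sqrt (a ^ 2) ≤ Real.sqrt (lam * b ^ 2) := Real.sqrt_le_sqrt h
    _ = Real.sqrt lam * Real.sqrt (b ^ 2) := Real.sqrt_mul hlam _
    _ = Real.sqrt lam * b := by rw [Real.sqrt_sq hb]

end DouglasAux

set_option maxHeartbeats 1000000 in
theorem stmt_1
    {H K G : Type*}
    [NormedAddCommGroup H] [InnerProductSpace ℂ H] [CompleteSpace H]
    [NormedAddCommGroup K] [InnerProductSpace ℂ K] [CompleteSpace K]
    [NormedAddCommGroup G] [InnerProductSpace ℂ G] [CompleteSpace G]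
    (A : H →L[ℂ] G) (B : K →L[ℂ] G) :
    ((∃ X : K →L[ℂ] H, A ∘L X = B) ↔ LinearMap.range (B : K →ₗ[ℂ] G) ≤ LinearMap.range (A : H →ₗ[ℂ] G)) ∧
    ((∃ X : K →L[ℂ] H, A ∘L X = B) ↔
      ∃ lam : ℝ, 0 < lam ∧
        ((lam : ℂ) • (A ∘L adjoint A) - B ∘L adjoint B).IsPositive) ∧
    (LinearMap.range (B : K →ₗ[ℂ] G) ≤ LinearMap.range (A : H →ₗ[ℂ] G) →
      (∃! D : K →L[ℂ] H, A ∘L D = B ∧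
          LinearMap.range (D : K →ₗ[ℂ] H) ≤ (LinearMap.range (adjoint A : G →ₗ[ℂ] H)).topologicalClosure) ∧
      (∀ D : K →L[ℂ] H, A ∘L D = B →
        LinearMap.range (D : K →ₗ[ℂ] H) ≤ (LinearMap.range (adjoint A : G →ₗ[ℂ] H)).topologicalClosure →
        ‖D‖ ^ 2 = sInf {lam : ℝ | 0 < lam ∧
          ((lam : ℂ) • (A ∘L adjoint A) - B ∘L adjoint B).IsPositive})) := by
  refine ⟨⟨?_, ?_⟩, ⟨?_, ?_⟩, ?_⟩
  · rintro ⟨X, hX⟩ b ⟨k, hk⟩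
    refine ⟨X k, ?_⟩
    rw [← hk, ← hX]
    rfl
  · exact fun hr => douglas_range A B hr
  · rintro ⟨X, hX⟩
    refine ⟨‖X‖ ^ 2 + 1, by positivity, ?_⟩
    rw [douglas_pos_iff]
    intro g
    have h1 : ‖adjoint B g‖ ≤ ‖X‖ * ‖adjoint A g‖ := douglas_sol_bound A B X hX g
    nlinarith [norm_nonneg ((adjoint B) g), norm_nonneg ((adjoint A) g), norm_nonneg X]
  · rintro ⟨lam, hlam, hpos⟩
    rw [douglas_pos_iff] at hpos
    have hineq : ∀ g, ‖adjoint B g‖ ≤ Real.sqrt lam * ‖adjoint A g‖ := fun g =>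
      douglas_sqrt_bound hlam.le (norm_nonneg _) (norm_nonneg _) (hpos g)
    obtain ⟨X, hX, -, -⟩ := douglas_construct A B (Real.sqrt_nonneg lam) hineq
    exact ⟨X, hX⟩
  · intro hr
    obtain ⟨X0, hX0⟩ := douglas_range A B hr
    have hb0 : ∀ g, ‖adjoint B g‖ ≤ ‖X0‖ * ‖adjoint A g‖ := douglas_sol_bound A B X0 hX0
    obtain ⟨D0, hD0, hD0r, hD0n⟩ := douglas_construct A B (norm_nonneg X0) hb0
    constructor
    · refine ⟨D0, ⟨hD0, hD0r⟩, ?_⟩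
      rintro D' ⟨hD', hD'r⟩
      refine douglas_unique A (fun k => ?_) hD'r hD0r
      rw [show A (D' k) = (A ∘L D') k from rfl, show A (D0 k) = (A ∘L D0) k from rfl,
        hD', hD0]
    · intro D hD hDr
      set Pset : Set ℝ := {lam : ℝ | 0 < lam ∧
        ((lam : ℂ) • (A ∘L adjoint A) - B ∘L adjoint B).IsPositive} with hPset
      have hmem : ∀ ε : ℝ, 0 < ε → ‖D‖ ^ 2 + ε ∈ Pset := by
        intro ε hε
        refine ⟨by positivity, ?_⟩
        rw [douglas_pos_iff]
        intro g
        have h1 := douglas_sol_bound A B D hD g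
        nlinarith [norm_nonneg ((adjoint A) g), norm_nonneg ((adjoint B) g), norm_nonneg D]
      have hne : Pset.Nonempty := ⟨‖D‖ ^ 2 + 1, hmem 1 one_pos⟩
      have hbdd : BddBelow Pset := ⟨0, fun lam hlam => hlam.1.le⟩
      apply le_antisymm
      · apply le_csInf hne
        intro lam hlam
        obtain ⟨hlpos, hlposop⟩ := hlam
        rw [douglas_pos_iff] at hlposop
        have hineq : ∀ g, ‖adjoint B g‖ ≤ Real.sqrt lam * ‖adjoint A g‖ := fun g =>
          douglas_sqrt_bound hlpos.le (norm_nonneg _) (norm_nonneg _) (hlposop g)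
        obtain ⟨D', hD', hD'r, hD'n⟩ := douglas_construct A B (Real.sqrt_nonneg lam) hineq
        have hDD : D' = D := by
          refine douglas_unique A (fun k => ?_) hD'r hDr
          rw [show A (D' k) = (A ∘L D') k from rfl, show A (D k) = (A ∘L D) k from rfl,
            hD', hD]
        rw [← hDD]
        nlinarith [Real.sq_sqrt hlpos.le, norm_nonneg D', hD'n]
      · have hstep : ∀ ε : ℝ, 0 < ε → sInf Pset ≤ ‖D‖ ^ 2 + ε := fun ε hε =>
          csInf_le hbdd (hmem ε hε)
        by_contra hcon
        push_neg at hcon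
        have := hstep ((sInf Pset - ‖D‖ ^ 2) / 2) (by linarith)
        linarith
end

section
/- Let B : H → K be a bounded linear operator with closed range, and let A₁ ∈ L(H)⁺, A₂ ∈ L(K)⁺ be positive semidefinite bounded operators. There exists a bounded operator C : K → H satisfying BCB = B, CBC = C, A₁CB = (CB)*A₁, and A₂BC = (BC)*A₂ if and only if the pairs (A₁, N(B)) and (A₂, R(B)) are compatible, i.e., there exists a bounded projection Q with R(Q) = N(B) and A₁Q = Q*A₁, and a bounded projection P with R(P) = R(B) and A₂P = P*A₂. -/
open ContinuousLinearMap

/-- A positive operator `A` and a closed subspace `S` form a compatible pair if there is a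
bounded idempotent `Q` with range `S` which is `A`-Hermitian: `AQ = Q*A`. -/
def Compatible {H : Type*} [NormedAddCommGroup H] [InnerProductSpace ℂ H] [CompleteSpace H]
    (A : H →L[ℂ] H) (S : Submodule ℂ H) : Prop :=
  ∃ Q : H →L[ℂ] H, Q ∘L Q = Q ∧ LinearMap.range (Q : H →ₗ[ℂ] H) = S ∧ A ∘L Q = adjoint Q ∘L A

theorem stmt_2
    {H K : Type*}
    [NormedAddCommGroup H] [InnerProductSpace ℂ H] [CompleteSpace H]
    [NormedAddCommGroup K] [InnerProductSpace ℂ K] [CompleteSpace K]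
    (B : H →L[ℂ] K) (hB : IsClosed (LinearMap.range (B : H →ₗ[ℂ] K) : Set K))
    (A₁ : H →L[ℂ] H) (hA₁ : A₁.IsPositive)
    (A₂ : K →L[ℂ] K) (hA₂ : A₂.IsPositive) :
    (∃ C : K →L[ℂ] H,
      B ∘L C ∘L B = B ∧ C ∘L B ∘L C = C ∧
      A₁ ∘L (C ∘L B) = adjoint (C ∘L B) ∘L A₁ ∧
      A₂ ∘L (B ∘L C) = adjoint (B ∘L C) ∘L A₂) ↔
    (Compatible A₁ (LinearMap.ker (B : H →ₗ[ℂ] K)) ∧ Compatible A₂ (LinearMap.range (B : H →ₗ[ℂ] K))) := by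
  constructor
  · rintro ⟨C, h1, h2, h3, h4⟩
    have h1' : ∀ x, B (C (B x)) = B x := fun x => congrFun (congrArg DFunLike.coe h1) x
    constructor
    · refine ⟨1 - C ∘L B, ?_, ?_, ?_⟩
      · ext x
        simp [h1' x]
      · apply le_antisymm
        · rintro y ⟨x, rfl⟩
          simp [LinearMap.mem_ker, h1' x]
        · intro x hx
          rw [LinearMap.mem_ker] at hx
          exact ⟨x, by simp [show B x = 0 from hx]⟩
      · have : adjoint (1 - C ∘L B) = 1 - adjoint (C ∘L B) := by
          simp [map_sub, one_def, adjoint_id]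
        rw [this]
        simp only [sub_comp, comp_sub, one_def, id_comp, comp_id]
        rw [h3]
    · refine ⟨B ∘L C, ?_, ?_, ?_⟩
      · ext y
        simp [h1' (C y)]
      · apply le_antisymm
        · rintro y ⟨x, rfl⟩
          exact ⟨C x, rfl⟩
        · rintro y ⟨x, rfl⟩
          exact ⟨B x, (h1' x)⟩
      · exact h4
  · rintro ⟨⟨Q, hQQ, hQr, hQA⟩, ⟨P, hPP, hPr, hPA⟩⟩
    have hQQ' : ∀ x, Q (Q x) = Q x := fun x => congrFun (congrArg DFunLike.coe hQQ) x
    have hPP' : ∀ y, P (P y) = P y := fun y => congrFun (congrArg DFunLike.coe hPP) y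
    -- B vanishes on range Q = ker B
    have hBQ : ∀ x, B (Q x) = 0 := fun x => by
      have : Q x ∈ LinearMap.ker (B : H →ₗ[ℂ] K) := hQr ▸ LinearMap.mem_range_self (Q : H →ₗ[ℂ] H) x
      exact this
    -- P fixes range B
    have hPB : ∀ x, P (B x) = B x := fun x => by
      obtain ⟨z, hz⟩ : B x ∈ LinearMap.range (P : K →ₗ[ℂ] K) := hPr ▸ LinearMap.mem_range_self (B : H →ₗ[ℂ] K) x
      rw [← hz]; exact hPP' z
    -- P maps into range B
    have hPmem : ∀ y, P y ∈ LinearMap.range (B : H →ₗ[ℂ] K) := fun y =>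
      hPr ▸ LinearMap.mem_range_self (P : K →ₗ[ℂ] K) y
    haveI : CompleteSpace (LinearMap.range (B : H →ₗ[ℂ] K)) := hB.completeSpace_coe
    -- the restriction of B to ker Q, corestricted to range B
    set N : Submodule ℂ H := LinearMap.ker (Q : H →ₗ[ℂ] H) with hN
    have hBmem : ∀ x : N, B (x : H) ∈ LinearMap.range (B : H →ₗ[ℂ] K) := fun x => LinearMap.mem_range_self (B : H →ₗ[ℂ] K) (x : H)
    set B' : N →L[ℂ] LinearMap.range (B : H →ₗ[ℂ] K) :=
      (B ∘L N.subtypeL).codRestrict (LinearMap.range (B : H →ₗ[ℂ] K)) (fun x => LinearMap.mem_range_self (B : H →ₗ[ℂ] K) _)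
      with hB'
    have hB'apply : ∀ x : N, (B' x : K) = B (x : H) := fun x => rfl
    have hinj : LinearMap.ker (B' : N →ₗ[ℂ] LinearMap.range (B : H →ₗ[ℂ] K)) = ⊥ := by
      rw [LinearMap.ker_eq_bot']
      intro m hm
      have hmB : B (m : H) = 0 := congrArg Subtype.val hm
      have hmker : (m : H) ∈ LinearMap.ker (B : H →ₗ[ℂ] K) := hmB
      obtain ⟨z, hz⟩ : (m : H) ∈ LinearMap.range (Q : H →ₗ[ℂ] H) := hQr ▸ hmker
      have hQm : Q (m : H) = 0 := m.2
      have : (m : H) = 0 := by rw [← hz] at hQm ⊢; exact (hQQ' z).symm.trans hQm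
      exact Subtype.ext this
    have hsurj : LinearMap.range (B' : N →ₗ[ℂ] LinearMap.range (B : H →ₗ[ℂ] K)) = ⊤ := by
      rw [LinearMap.range_eq_top]
      rintro ⟨y, x, rfl⟩
      refine ⟨⟨x - Q x, ?_⟩, ?_⟩
      · simp [N, LinearMap.mem_ker, map_sub, hQQ' x]
      · apply Subtype.ext
        simp [hB'apply, map_sub, hBQ x]
    set e := ContinuousLinearEquiv.ofBijective B' hinj hsurj with he
    set C : K →L[ℂ] H :=
      N.subtypeL ∘L (e.symm : LinearMap.range (B : H →ₗ[ℂ] K) →L[ℂ] N) ∘L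
        (P.codRestrict (LinearMap.range (B : H →ₗ[ℂ] K)) hPmem) with hC
    have hCapply : ∀ y, C y = (e.symm ⟨P y, hPmem y⟩ : H) := fun y => rfl
    -- B ∘ C = P
    have hBC : ∀ y, B (C y) = P y := fun y => by
      rw [hCapply]
      have := e.apply_symm_apply ⟨P y, hPmem y⟩
      have : (e (e.symm ⟨P y, hPmem y⟩) : K) = P y := congrArg Subtype.val this
      exact this
    -- C ∘ B = 1 - Q
    have hCB : ∀ x, C (B x) = x - Q x := fun x => by
      rw [hCapply]
      have hxN : x - Q x ∈ N := by simp [N, LinearMap.mem_ker, map_sub, hQQ' x]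
      have : e ⟨x - Q x, hxN⟩ = ⟨P (B x), hPmem (B x)⟩ := by
        apply Subtype.ext
        show B (x - Q x) = P (B x)
        rw [map_sub, hBQ x, sub_zero, hPB]
      rw [← this, e.symm_apply_apply]
    have hCBc : C ∘L B = 1 - Q := by ext x; simp [hCB x]
    have hBCc : B ∘L C = P := by ext y; exact hBC y
    refine ⟨C, ?_, ?_, ?_, ?_⟩
    · ext x
      simp only [comp_apply]
      rw [hCB x, map_sub, hBQ x, sub_zero]
    · ext y
      simp only [comp_apply]
      rw [hBC y, hCapply (P y), hCapply y]
      exact congrArg (fun a => ((e.symm a : N) : H)) (Subtype.ext (hPP' y))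
    · rw [hCBc]
      have : adjoint (1 - Q) = 1 - adjoint Q := by simp [map_sub, one_def, adjoint_id]
      rw [this]
      simp only [sub_comp, comp_sub, one_def, id_comp, comp_id]
      rw [hQA]
    · rw [hBCc]
      exact hPA
end

section
/- Let B ∈ L(H,K) have closed range, and let Q ∈ L(H), P ∈ L(K) be bounded projections with N(Q) = N(B) and R(P) = R(B). Then there exists a unique bounded operator C ∈ L(K,H) satisfying BC = P and R(C) = R(Q). Moreover this C satisfies BCB = B, CBC = C, CB = Q, and N(C) = N(P). -/
open ContinuousLinearMap

theorem stmt_4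
    {H K : Type*}
    [NormedAddCommGroup H] [InnerProductSpace ℂ H] [CompleteSpace H]
    [NormedAddCommGroup K] [InnerProductSpace ℂ K] [CompleteSpace K]
    (B : H →L[ℂ] K) (hB : IsClosed (LinearMap.range (B : H →ₗ[ℂ] K) : Set K))
    (Q : H →L[ℂ] H) (hQ : Q ∘L Q = Q) (hQker : LinearMap.ker (Q : H →ₗ[ℂ] H) = LinearMap.ker (B : H →ₗ[ℂ] K))
    (P : K →L[ℂ] K) (hP : P ∘L P = P) (hPran : LinearMap.range (P : K →ₗ[ℂ] K) = LinearMap.range (B : H →ₗ[ℂ] K)) :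
    ∃ C : K →L[ℂ] H,
      (B ∘L C = P ∧ LinearMap.range (C : K →ₗ[ℂ] H) = LinearMap.range (Q : H →ₗ[ℂ] H) ∧
        B ∘L C ∘L B = B ∧ C ∘L B ∘L C = C ∧ C ∘L B = Q ∧
        LinearMap.ker (C : K →ₗ[ℂ] H) = LinearMap.ker (P : K →ₗ[ℂ] K)) ∧
      ∀ C' : K →L[ℂ] H, B ∘L C' = P → LinearMap.range (C' : K →ₗ[ℂ] H) = LinearMap.range (Q : H →ₗ[ℂ] H) → C' = C := by
  have hQQ : ∀ x, Q (Q x) = Q x := fun x => by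
    have := ContinuousLinearMap.ext_iff.mp hQ x; simpa using this
  have hPP : ∀ y, P (P y) = P y := fun y => by
    have := ContinuousLinearMap.ext_iff.mp hP y; simpa using this
  have hPfix : ∀ y ∈ LinearMap.range (B : H →ₗ[ℂ] K), P y = y := by
    intro y hy
    rw [← hPran] at hy
    obtain ⟨z, rfl⟩ := hy
    exact hPP z
  have hBQ : ∀ x, B (Q x) = B x := by
    intro x
    have hk : x - Q x ∈ LinearMap.ker (Q : H →ₗ[ℂ] H) := by
      simp [LinearMap.mem_ker, map_sub, hQQ]
    rw [hQker] at hk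
    have : B (x - Q x) = 0 := hk
    rw [map_sub, sub_eq_zero] at this
    exact this.symm
  have hMc : IsClosed (LinearMap.range (Q : H →ₗ[ℂ] H) : Set H) := by
    have heq : (LinearMap.range (Q : H →ₗ[ℂ] H) : Submodule ℂ H)
        = LinearMap.ker ((ContinuousLinearMap.id ℂ H - Q : H →L[ℂ] H) : H →ₗ[ℂ] H) := by
      ext x
      constructor
      · rintro ⟨a, rfl⟩
        simp [LinearMap.mem_ker, sub_eq_zero, hQQ]
      · intro hx
        have : x - Q x = 0 := by simpa [LinearMap.mem_ker, sub_eq_zero] using hx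
        exact ⟨x, (sub_eq_zero.mp this).symm⟩
    rw [heq]
    exact isClosed_ker (ContinuousLinearMap.id ℂ H - Q)
  haveI : CompleteSpace (LinearMap.range (Q : H →ₗ[ℂ] H)) := hMc.completeSpace_coe
  haveI : CompleteSpace (LinearMap.range (B : H →ₗ[ℂ] K)) := hB.completeSpace_coe
  set f : (LinearMap.range (Q : H →ₗ[ℂ] H) : Submodule ℂ H) →L[ℂ] (LinearMap.range (B : H →ₗ[ℂ] K) : Submodule ℂ K) :=
    (B ∘L (LinearMap.range (Q : H →ₗ[ℂ] H)).subtypeL).codRestrict (LinearMap.range (B : H →ₗ[ℂ] K))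
      (fun x => ⟨(x : H), rfl⟩) with hf
  have hfval : ∀ m : (LinearMap.range (Q : H →ₗ[ℂ] H) : Submodule ℂ H), ((f m : K)) = B (m : H) := fun m => rfl
  have hker : LinearMap.ker (f : (LinearMap.range (Q : H →ₗ[ℂ] H)) →ₗ[ℂ] (LinearMap.range (B : H →ₗ[ℂ] K))) = ⊥ := by
    rw [LinearMap.ker_eq_bot']
    intro m hm
    have hB0 : B (m : H) = 0 := by
      have h := congrArg Subtype.val hm
      rw [ContinuousLinearMap.coe_coe, hfval] at h
      simpa using h
    have hmk : (m : H) ∈ LinearMap.ker (Q : H →ₗ[ℂ] H) := by rw [hQker]; exact hB0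
    obtain ⟨a, ha⟩ := m.2
    have : Q (m : H) = (m : H) := by rw [← ha, ContinuousLinearMap.coe_coe, hQQ]
    have hz : (m : H) = 0 := by rw [← this]; exact hmk
    exact Subtype.ext hz
  have hrange : LinearMap.range (f : (LinearMap.range (Q : H →ₗ[ℂ] H)) →ₗ[ℂ] (LinearMap.range (B : H →ₗ[ℂ] K))) = ⊤ := by
    rw [LinearMap.range_eq_top]
    intro n
    obtain ⟨x, hx⟩ := n.2
    refine ⟨⟨Q x, ⟨x, rfl⟩⟩, ?_⟩
    apply Subtype.ext
    show B (Q x) = (n : K)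
    simpa [hBQ] using hx
  set e := ContinuousLinearEquiv.ofBijective f hker hrange with he
  have hef : ∀ m, e m = f m := fun m => rfl
  have hmemP : ∀ y : K, P y ∈ LinearMap.range (B : H →ₗ[ℂ] K) := fun y =>
    hPran ▸ LinearMap.mem_range_self (P : K →ₗ[ℂ] K) y
  set C : K →L[ℂ] H :=
    (LinearMap.range (Q : H →ₗ[ℂ] H)).subtypeL ∘L ((e.symm : (LinearMap.range (B : H →ₗ[ℂ] K) : Submodule ℂ K) →L[ℂ] (LinearMap.range (Q : H →ₗ[ℂ] H) : Submodule ℂ H)) ∘L (P.codRestrict (LinearMap.range (B : H →ₗ[ℂ] K)) hmemP)) with hC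
  have hCval : ∀ y : K, C y = ((e.symm ⟨P y, hmemP y⟩ : (LinearMap.range (Q : H →ₗ[ℂ] H) : Submodule ℂ H)) : H) :=
    fun y => rfl
  have hBsymm : ∀ n : (LinearMap.range (B : H →ₗ[ℂ] K) : Submodule ℂ K),
      B ((e.symm n : (LinearMap.range (Q : H →ₗ[ℂ] H) : Submodule ℂ H)) : H) = (n : K) := by
    intro n
    have h1 : e (e.symm n) = n := e.apply_symm_apply n
    have := congrArg Subtype.val h1
    rw [hef, hfval] at this
    exact this
  have hmemB : ∀ x : H, B x ∈ LinearMap.range (B : H →ₗ[ℂ] K) := fun x => LinearMap.mem_range_self (B : H →ₗ[ℂ] K) x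
  have hsymmB : ∀ x : H, e.symm ⟨B x, hmemB x⟩ = ⟨Q x, ⟨x, rfl⟩⟩ := by
    intro x
    have h1 : e ⟨Q x, ⟨x, rfl⟩⟩ = ⟨B x, hmemB x⟩ := by
      rw [hef]
      exact Subtype.ext (by simpa [hfval] using hBQ x)
    rw [← h1, e.symm_apply_apply]
  -- BC = P
  have hBC : B ∘L C = P := by
    ext y
    simp only [ContinuousLinearMap.comp_apply]
    rw [hCval]
    exact hBsymm _
  -- CB = Q
  have hCB : C ∘L B = Q := by
    ext x
    simp only [ContinuousLinearMap.comp_apply]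
    rw [hCval]
    have hsub : (⟨P (B x), hmemP (B x)⟩ : (LinearMap.range (B : H →ₗ[ℂ] K) : Submodule ℂ K))
        = ⟨B x, hmemB x⟩ := Subtype.ext (hPfix _ (hmemB x))
    rw [hsub, hsymmB]
  -- range C = range Q
  have hranC : LinearMap.range (C : K →ₗ[ℂ] H) = LinearMap.range (Q : H →ₗ[ℂ] H) := by
    apply le_antisymm
    · rintro _ ⟨y, rfl⟩
      rw [ContinuousLinearMap.coe_coe, hCval]
      exact (e.symm ⟨P y, hmemP y⟩).2
    · rintro _ ⟨x, rfl⟩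
      refine ⟨B x, ?_⟩
      have := ContinuousLinearMap.ext_iff.mp hCB x
      simpa using this
  -- ker C = ker P
  have hkerC : LinearMap.ker (C : K →ₗ[ℂ] H) = LinearMap.ker (P : K →ₗ[ℂ] K) := by
    ext y
    simp only [LinearMap.mem_ker]
    constructor
    · intro h
      rw [ContinuousLinearMap.coe_coe, hCval] at h
      have h0 : e.symm ⟨P y, hmemP y⟩ = 0 := Subtype.ext h
      have h1 : (⟨P y, hmemP y⟩ : (LinearMap.range (B : H →ₗ[ℂ] K) : Submodule ℂ K)) = 0 := by
        have := congrArg e h0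
        rwa [e.apply_symm_apply, map_zero] at this
      exact congrArg Subtype.val h1
    · intro h
      rw [ContinuousLinearMap.coe_coe, hCval]
      have : (⟨P y, hmemP y⟩ : (LinearMap.range (B : H →ₗ[ℂ] K) : Submodule ℂ K)) = 0 := Subtype.ext h
      rw [this, map_zero]
      rfl
  have hBCB : B ∘L C ∘L B = B := by
    rw [← ContinuousLinearMap.comp_assoc, hBC]
    ext x
    exact hPfix _ (hmemB x)
  have hCBC : C ∘L B ∘L C = C := by
    rw [← ContinuousLinearMap.comp_assoc, hCB]
    ext y
    simp only [ContinuousLinearMap.comp_apply]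
    have hm : C y ∈ LinearMap.range (Q : H →ₗ[ℂ] H) := hranC ▸ LinearMap.mem_range_self (C : K →ₗ[ℂ] H) y
    obtain ⟨a, ha⟩ := hm
    rw [← ha, ContinuousLinearMap.coe_coe, hQQ]
  refine ⟨C, ⟨hBC, hranC, hBCB, hCBC, hCB, hkerC⟩, ?_⟩
  intro C' hBC' hranC'
  ext y
  have h1 : Q (C' y) = C' y := by
    have hm : C' y ∈ LinearMap.range (Q : H →ₗ[ℂ] H) := hranC' ▸ LinearMap.mem_range_self (C' : K →ₗ[ℂ] H) y
    obtain ⟨a, ha⟩ := hm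
    rw [← ha, ContinuousLinearMap.coe_coe, hQQ]
  have h2 : C (B (C' y)) = C' y := by
    have := ContinuousLinearMap.ext_iff.mp hCB (C' y)
    simp only [ContinuousLinearMap.comp_apply] at this
    rw [this, h1]
  have h3 : B (C' y) = P y := by
    have := ContinuousLinearMap.ext_iff.mp hBC' y
    simpa using this
  have h4 : C (P y) = C y := by
    have hPy : P y = B (C y) := by
      have := ContinuousLinearMap.ext_iff.mp hBC y
      simp only [ContinuousLinearMap.comp_apply] at this
      rw [this]
    rw [hPy]
    have := ContinuousLinearMap.ext_iff.mp hCB (C y)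
    simp only [ContinuousLinearMap.comp_apply] at this
    rw [this]
    have hm : C y ∈ LinearMap.range (Q : H →ₗ[ℂ] H) := hranC ▸ LinearMap.mem_range_self (C : K →ₗ[ℂ] H) y
    obtain ⟨a, ha⟩ := hm
    rw [← ha, ContinuousLinearMap.coe_coe, hQQ]
  rw [← h2, h3, h4]
end

section
/- Let A ∈ L(H)⁺ and S a closed subspace such that (A,S) is compatible. Then P_{A,S} is a projection with range S and nullspace A⁻¹(S^⊥) ⊖ (N(A) ∩ S) (the orthogonal complement of N(A) ∩ S inside A⁻¹(S^⊥)). -/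
open ContinuousLinearMap

local notation "⟪" x ", " y "⟫" => @inner ℂ _ _ x y

-- positive operator with zero quadratic form at v kills v
theorem aux_pos_zero {H : Type*} [NormedAddCommGroup H] [InnerProductSpace ℂ H] [CompleteSpace H]
    (A : H →L[ℂ] H) (hA : A.IsPositive) (v : H) (hv : ⟪A v, v⟫ = 0) : A v = 0 := by
  have hsym : (A : H →ₗ[ℂ] H).IsSymmetric :=
    (ContinuousLinearMap.isSelfAdjoint_iff_isSymmetric.mp hA.isSelfAdjoint)
  have hre : ∀ w : H, Complex.re ⟪A v, w⟫ = 0 := by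
    intro w
    set a : ℝ := Complex.re ⟪A v, w⟫ with ha
    set b : ℝ := Complex.re ⟪A w, w⟫ with hb
    have hbnn : 0 ≤ b := by
      have := hA.2 w
      rwa [ContinuousLinearMap.reApplyInnerSelf_apply] at this
    have hf : ∀ t : ℝ, 0 ≤ 2 * a * t + b * t ^ 2 := by
      intro t
      have h0 := hA.2 (v + (t : ℂ) • w)
      rw [ContinuousLinearMap.reApplyInnerSelf_apply] at h0
      have hexp : ⟪A (v + (t : ℂ) • w), v + (t : ℂ) • w⟫
          = ⟪A v, v⟫ + (t : ℂ) * ⟪A v, w⟫ + (t : ℂ) * ⟪A w, v⟫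
            + (t : ℂ) * ((t:ℂ) * ⟪A w, w⟫) := by
        simp only [map_add, map_smul, inner_add_left, inner_add_right,
          inner_smul_left, inner_smul_right, Complex.conj_ofReal]
        ring
      have hsymvw : ⟪A w, v⟫ = starRingEnd ℂ ⟪A v, w⟫ := by
        rw [inner_conj_symm]
        exact hsym w v
      rw [hexp, hv, hsymvw] at h0
      simp only [RCLike.re_to_complex, map_add, map_mul, Complex.ofReal_re,
        Complex.ofReal_im, Complex.add_re, Complex.mul_re, Complex.conj_re, Complex.conj_im,
        Complex.zero_re] at h0
      nlinarith [h0]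
    have hmain := hf (-a / (b + 1))
    have hb1 : (0:ℝ) < b + 1 := by linarith
    have h2 : 0 ≤ (2*a*(-a/(b+1)) + b*(-a/(b+1))^2) * (b+1)^2 :=
      mul_nonneg hmain (sq_nonneg _)
    have h3 : (2*a*(-a/(b+1)) + b*(-a/(b+1))^2) * (b+1)^2 = -(a^2*(b+2)) := by
      field_simp
      ring
    have h4 : a^2 ≤ 0 := by nlinarith
    have h5 : a^2 = 0 := le_antisymm h4 (sq_nonneg a)
    exact (pow_eq_zero_iff (two_ne_zero)).mp h5
  have hz : ⟪A v, A v⟫ = 0 := by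
    have h1 := hre (A v)
    have h2 := hre ((Complex.I) • (A v))
    rw [inner_smul_right] at h2
    have him : Complex.im ⟪A v, A v⟫ = 0 := by
      have : Complex.re (Complex.I * ⟪A v, A v⟫) = -Complex.im ⟪A v, A v⟫ := by
        simp [Complex.mul_re]
      rw [this] at h2; linarith
    exact Complex.ext h1 him
  exact inner_self_eq_zero.mp hz

theorem stmt_9
    {H : Type*} [NormedAddCommGroup H] [InnerProductSpace ℂ H] [CompleteSpace H]
    (A : H →L[ℂ] H) (hA : A.IsPositive)
    (S : Submodule ℂ H) [CompleteSpace S]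
    (hcompat : ∃ Q : H →L[ℂ] H, Q ∘L Q = Q ∧ LinearMap.range (Q : H →ₗ[ℂ] H) = S ∧
      A ∘L Q = adjoint Q ∘L A)
    -- `Ps` is the orthogonal projection onto `S`, viewed as an operator on `H`.
    (Ps : H →L[ℂ] H) (hPs : Ps = S.subtypeL ∘L S.orthogonalProjectionOnto)
    -- `D` is the reduced solution of the equation `(P A P) X = P A (I - P)`.
    (D : H →L[ℂ] H) (hD : (Ps ∘L A ∘L Ps) ∘L D = Ps ∘L A ∘L (1 - Ps))
    (hDran : LinearMap.range (D : H →ₗ[ℂ] H) ≤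
      (LinearMap.range ((adjoint (Ps ∘L A ∘L Ps) : H →L[ℂ] H) : H →ₗ[ℂ] H)).topologicalClosure) :
    (Ps + D) ∘L (Ps + D) = Ps + D ∧
    LinearMap.range ((Ps + D : H →L[ℂ] H) : H →ₗ[ℂ] H) = S ∧
    LinearMap.ker ((Ps + D : H →L[ℂ] H) : H →ₗ[ℂ] H) =
      Submodule.comap (A : H →ₗ[ℂ] H) Sᗮ ⊓ (LinearMap.ker (A : H →ₗ[ℂ] H) ⊓ S)ᗮ := by
  clear hcompat
  have hPsmem : ∀ x : H, Ps x ∈ S := by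
    intro x; rw [hPs]; exact (S.orthogonalProjectionOnto x).2
  have hPsid : ∀ x ∈ S, Ps x = x := by
    intro x hx; rw [hPs]
    exact S.starProjection_eq_self_iff.mpr hx
  have hPs_adj : adjoint Ps = Ps := by
    rw [hPs]; exact (isSelfAdjoint_starProjection S).adjoint_eq
  have hA_adj : adjoint A = A := hA.isSelfAdjoint.adjoint_eq
  have hPsPs : ∀ x, Ps (Ps x) = Ps x := fun x => hPsid _ (hPsmem x)
  have hTadj : adjoint (Ps ∘L A ∘L Ps) = Ps ∘L A ∘L Ps := by
    rw [adjoint_comp, adjoint_comp, hPs_adj, hA_adj]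
    ext x; simp [comp_apply]
  have hSclosed : IsClosed (S : Set H) :=
    (completeSpace_coe_iff_isComplete.mp ‹CompleteSpace S›).isClosed
  have hDmem : ∀ x : H, D x ∈ S := by
    intro x
    have hrange : LinearMap.range ((adjoint (Ps ∘L A ∘L Ps) : H →L[ℂ] H) : H →ₗ[ℂ] H) ≤ S := by
      rw [hTadj]; rintro y ⟨u, rfl⟩; exact hPsmem _
    exact (Submodule.topologicalClosure_minimal _ hrange hSclosed)
      (hDran (LinearMap.mem_range_self _ x))
  have hDzero : ∀ y : H, (Ps ∘L A ∘L Ps) (D y) = 0 → D y = 0 := by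
    intro y hy
    have horth : (LinearMap.range ((adjoint (Ps ∘L A ∘L Ps) : H →L[ℂ] H) : H →ₗ[ℂ] H)).topologicalClosure ≤
        (LinearMap.ker ((Ps ∘L A ∘L Ps : H →L[ℂ] H) : H →ₗ[ℂ] H))ᗮ := by
      refine Submodule.topologicalClosure_minimal _ ?_ (Submodule.isClosed_orthogonal _)
      rintro z ⟨u, rfl⟩
      rw [Submodule.mem_orthogonal]
      intro k hk
      rw [← inner_conj_symm, ContinuousLinearMap.coe_coe, adjoint_inner_left,
        show (Ps ∘L A ∘L Ps) k = 0 from LinearMap.mem_ker.mp hk]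
      simp
    have h2 := horth (hDran (LinearMap.mem_range_self _ y))
    have h3 : D y ∈ LinearMap.ker ((Ps ∘L A ∘L Ps : H →L[ℂ] H) : H →ₗ[ℂ] H) := hy
    exact inner_self_eq_zero.mp ((Submodule.mem_orthogonal _ _).mp h2 (D y) h3)
  have hDPs : ∀ x, D (Ps x) = 0 := by
    intro x
    apply hDzero
    have h1 := congrArg (fun f : H →L[ℂ] H => f (Ps x)) hD
    simp only [comp_apply, sub_apply, one_apply] at h1
    simp only [comp_apply]
    rw [h1, hPsPs, ContinuousLinearMap.one_apply, sub_self, map_zero, map_zero]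
  have hPsD : ∀ x, Ps (D x) = D x := fun x => hPsid _ (hDmem x)
  have hDD : ∀ x, D (D x) = 0 := by
    intro x
    apply hDzero
    have h1 := congrArg (fun f : H →L[ℂ] H => f (D x)) hD
    simp only [comp_apply, sub_apply, one_apply] at h1
    simp only [comp_apply]
    rw [h1, hPsD, ContinuousLinearMap.one_apply, sub_self, map_zero, map_zero]
  -- key identity : Ps ∘ A = Ps ∘ A ∘ (Ps + D)
  have hkeyA : ∀ x, Ps (A x) = Ps (A (Ps x + D x)) := by
    intro x
    have h1 := congrArg (fun f : H →L[ℂ] H => f x) hD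
    simp only [comp_apply, sub_apply, one_apply] at h1
    rw [hPsD] at h1
    rw [map_add, map_add, h1, map_sub, map_sub]
    abel
  -- orthogonality of range D to ker A ⊓ S
  have hDorth : ∀ k, A k = 0 → k ∈ S → ∀ y, ⟪k, D y⟫ = 0 := by
    intro k hk1 hk2 y
    have hle : (LinearMap.range ((adjoint (Ps ∘L A ∘L Ps) : H →L[ℂ] H) : H →ₗ[ℂ] H)).topologicalClosure ≤ (ℂ ∙ k)ᗮ := by
      refine Submodule.topologicalClosure_minimal _ ?_ (Submodule.isClosed_orthogonal _)
      rintro z ⟨u, rfl⟩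
      rw [Submodule.mem_orthogonal]
      intro c hc
      rcases Submodule.mem_span_singleton.mp hc with ⟨a, rfl⟩
      rw [inner_smul_left]
      have hz : ⟪k, adjoint (Ps ∘L A ∘L Ps) u⟫ = 0 := by
        rw [hTadj]
        simp only [comp_apply]
        rw [← hPs_adj, adjoint_inner_right, hPs_adj, hPsid k hk2,
          ← hA_adj, adjoint_inner_right, hk1, inner_zero_left]
      rw [ContinuousLinearMap.coe_coe, hz, mul_zero]
    have := (Submodule.mem_orthogonal _ _).mp (hle (hDran (LinearMap.mem_range_self _ y)))
      k (Submodule.mem_span_singleton_self k)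
    exact this
  refine ⟨?_, ?_, ?_⟩
  · ext x
    simp only [comp_apply, add_apply, map_add]
    rw [hPsPs, hPsD, hDPs, hDD]
    abel
  · apply le_antisymm
    · rintro y ⟨x, rfl⟩
      exact S.add_mem (hPsmem x) (hDmem x)
    · intro s hs
      refine ⟨s - D s, ?_⟩
      simp only [ContinuousLinearMap.coe_coe, add_apply, map_sub]
      rw [hPsid s hs, hPsD, hDD]
      abel
  · ext x
    simp only [Submodule.mem_inf, LinearMap.mem_ker, Submodule.mem_comap,
      ContinuousLinearMap.coe_coe, add_apply]
    constructor
    · intro hx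
      constructor
      · -- A x ∈ Sᗮ
        have h0 : Ps (A x) = 0 := by rw [hkeyA x, hx, map_zero, map_zero]
        have h1 : A x - Ps (A x) ∈ Sᗮ := by
          rw [hPs]; exact S.sub_starProjection_mem_orthogonal (A x)
        rwa [h0, sub_zero] at h1
      · rw [Submodule.mem_orthogonal]
        intro k hk
        obtain ⟨hk1, hk2⟩ := Submodule.mem_inf.mp hk
        have hk1' : A k = 0 := hk1
        have hPsx : Ps x = -(D x) := eq_neg_of_add_eq_zero_left hx
        calc ⟪k, x⟫ = ⟪Ps k, x⟫ := by rw [hPsid k hk2]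
          _ = ⟪k, Ps x⟫ := by
              conv_lhs => rw [← hPs_adj]
              exact adjoint_inner_left Ps x k
          _ = -⟪k, D x⟫ := by rw [hPsx, inner_neg_right]
          _ = 0 := by rw [hDorth k hk1' hk2 x, neg_zero]
    · rintro ⟨hx1, hx2⟩
      set v := Ps x + D x with hv
      have hvS : v ∈ S := S.add_mem (hPsmem x) (hDmem x)
      have hPsAv : Ps (A v) = 0 := by
        rw [hv, ← hkeyA x]
        have hsub : A x - Ps (A x) ∈ Sᗮ := by
          rw [hPs]; exact S.sub_starProjection_mem_orthogonal (A x)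
        have h2 : Ps (A x) ∈ Sᗮ := by
          have h4 := Sᗮ.sub_mem hx1 hsub
          simpa using h4
        exact inner_self_eq_zero.mp
          ((Submodule.mem_orthogonal S _).mp h2 (Ps (A x)) (hPsmem (A x)))
      have hAv0 : A v = 0 := by
        apply aux_pos_zero A hA
        have h1 : ⟪A v, v⟫ = ⟪Ps (A v), v⟫ := by
          conv_rhs => rw [← hPs_adj]
          rw [adjoint_inner_left, hPsid v hvS]
        rw [h1, hPsAv, inner_zero_left]
      have hvx : ⟪v, x⟫ = 0 :=
        (Submodule.mem_orthogonal _ _).mp hx2 v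
          (Submodule.mem_inf.mpr ⟨LinearMap.mem_ker.mpr hAv0, hvS⟩)
      have e1 : ⟪v, Ps x⟫ = ⟪v, x⟫ := by
        conv_lhs => rw [← hPs_adj]
        rw [adjoint_inner_right, hPsid v hvS]
      have hfin : ⟪v, v⟫ = 0 := by
        nth_rewrite 2 [hv]
        rw [inner_add_right, e1, hvx, hDorth v hAv0 hvS x, add_zero]
      exact inner_self_eq_zero.mp hfin
end

section
/- If S is a finite-dimensional subspace of a Hilbert space H and A ∈ L(H)⁺, then the pair (A,S) is compatible, i.e., there exists a bounded projection Q with R(Q) = S and AQ = Q*A. -/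
open ContinuousLinearMap

section aux

variable {H : Type*} [NormedAddCommGroup H] [InnerProductSpace ℂ H] [CompleteSpace H]

/-- Cauchy–Schwarz for the semi-inner ℂ product induced by a positive operator. -/
lemma aux_cs (A : H →L[ℂ] H) (hA : A.IsPositive) (x y : H) :
    ‖(inner ℂ (A x) y : ℂ)‖ * ‖(inner ℂ (A y) x : ℂ)‖ ≤
      RCLike.re (inner ℂ (A x) x : ℂ) * RCLike.re (inner ℂ (A y) y : ℂ) := by
  have hsym : ∀ u v : H, (inner ℂ (A u) v : ℂ) = inner ℂ u (A v) :=
    fun u v => (isSelfAdjoint_iff_isSymmetric.mp hA.isSelfAdjoint) u v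
  letI core : PreInnerProductSpace.Core ℂ H :=
    { inner := fun u v => (inner ℂ (A u) v : ℂ)
      conj_inner_symm := by
        intro u v
        show (starRingEnd ℂ) (inner ℂ (A v) u : ℂ) = inner ℂ (A u) v
        rw [inner_conj_symm]
        exact (hsym u v).symm
      re_inner_nonneg := fun u => hA.re_inner_nonneg_left u
      add_left := by intro u v w; simp [inner_add_left]
      smul_left := by intro u v r; simp [inner_smul_left, mul_comm] }
  exact @InnerProductSpace.Core.inner_mul_inner_self_le ℂ H _ _ _ core x y

lemma aux_zero (A : H →L[ℂ] H) (hA : A.IsPositive) {x : H}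
    (hx : (inner ℂ (A x) x : ℂ) = 0) : A x = 0 := by
  have hsym : ∀ u v : H, (inner ℂ (A u) v : ℂ) = inner ℂ u (A v) :=
    fun u v => (isSelfAdjoint_iff_isSymmetric.mp hA.isSelfAdjoint) u v
  have h := aux_cs A hA x (A x)
  rw [hx] at h
  simp only [map_zero, zero_mul] at h
  have h1 : (inner ℂ (A (A x)) x : ℂ) = inner ℂ (A x) (A x) := by
    rw [hsym]
  rw [h1] at h
  have hz : (inner ℂ (A x) (A x) : ℂ) = 0 := by
    have hn : ‖(inner ℂ (A x) (A x) : ℂ)‖ = 0 := by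
      nlinarith [norm_nonneg (inner ℂ (A x) (A x) : ℂ)]
    exact norm_eq_zero.mp hn
  exact inner_self_eq_zero.mp hz

end aux

theorem stmt_10
    {H : Type*} [NormedAddCommGroup H] [InnerProductSpace ℂ H] [CompleteSpace H]
    (A : H →L[ℂ] H) (hA : A.IsPositive)
    (S : Submodule ℂ H) [FiniteDimensional ℂ S] :
    ∃ Q : H →L[ℂ] H, Q ∘L Q = Q ∧ LinearMap.range (Q : H →ₗ[ℂ] H) = S ∧ A ∘L Q = adjoint Q ∘L A := by
  classical
  have hsym : ∀ x y : H, (inner ℂ (A x) y : ℂ) = inner ℂ x (A y) :=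
    fun x y => (isSelfAdjoint_iff_isSymmetric.mp hA.isSelfAdjoint) x y
  set S₀ : Submodule ℂ H := S ⊓ LinearMap.ker (A : H →ₗ[ℂ] H) with hS₀def
  set S₁ : Submodule ℂ H := S₀ᗮ ⊓ S with hS₁def
  haveI : FiniteDimensional ℂ S₀ := Submodule.finiteDimensional_of_le inf_le_left
  haveI : FiniteDimensional ℂ S₁ := Submodule.finiteDimensional_of_le inf_le_right
  have hS₀S : S₀ ≤ S := inf_le_left
  have hS₁S : S₁ ≤ S := inf_le_right
  have hsup : S₀ ⊔ S₁ = S := Submodule.sup_orthogonal_inf_of_hasOrthogonalProjection hS₀S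
  -- the compression of A to S₁
  set π : H →L[ℂ] S₁ := S₁.orthogonalProjectionOnto with hπdef
  set T : S₁ →L[ℂ] S₁ := π ∘L (A ∘L S₁.subtypeL) with hTdef
  have hTapp : ∀ s : S₁, T s = π (A (s : H)) := fun s => rfl
  have hTinj : Function.Injective T := by
    intro s t hst
    rw [← sub_eq_zero, ← map_sub] at hst
    set u := s - t with hu
    have hAu : A (u : H) = 0 := by
      apply aux_zero A hA
      have h1 : (inner ℂ (A (u : H)) (u : H) : ℂ) = inner ℂ (π (A (u : H))) u :=
        (Submodule.inner_orthogonalProjectionOnto_eq_of_mem_right (K := S₁) u (A (u : H))).symm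
      rw [h1, ← hTapp u, hst, inner_zero_left]
    have humem : (u : H) ∈ S₀ := ⟨hS₁S u.2, hAu⟩
    have huorth : (u : H) ∈ S₀ᗮ := u.2.1
    have h0 : (inner ℂ (u : H) (u : H) : ℂ) = 0 :=
      (Submodule.mem_orthogonal S₀ (u : H)).mp huorth (u : H) humem
    have hu0 : (u : H) = 0 := inner_self_eq_zero.mp h0
    have : u = 0 := Subtype.ext hu0
    rwa [hu, sub_eq_zero] at this
  have hTbij : Function.Bijective T :=
    ⟨hTinj, (LinearMap.injective_iff_surjective (f := (T : S₁ →ₗ[ℂ] S₁))).mp hTinj⟩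
  set e : S₁ ≃ₗ[ℂ] S₁ := LinearEquiv.ofBijective (T : S₁ →ₗ[ℂ] S₁) hTbij with hedef
  set T' : S₁ →L[ℂ] S₁ := LinearMap.toContinuousLinearMap (e.symm : S₁ →ₗ[ℂ] S₁) with hT'def
  have hTT' : ∀ u : S₁, T (T' u) = u := fun u => e.apply_symm_apply u
  have hT'T : ∀ u : S₁, T' (T u) = u := fun u => e.symm_apply_apply u
  -- the projections
  set Q₁ : H →L[ℂ] H := S₁.subtypeL ∘L (T' ∘L (π ∘L A)) with hQ₁def
  set P : H →L[ℂ] H := S₀.subtypeL ∘L S₀.orthogonalProjectionOnto with hPdef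
  set Q : H →L[ℂ] H := Q₁ + (P ∘L (ContinuousLinearMap.id ℂ H - Q₁)) with hQdef
  have hQ₁app : ∀ x : H, Q₁ x = ((T' (π (A x)) : S₁) : H) := fun x => rfl
  have hQ₁mem : ∀ x : H, Q₁ x ∈ S₁ := fun x => (T' (π (A x))).2
  have hPmem : ∀ x : H, P x ∈ S₀ := fun x => (S₀.orthogonalProjectionOnto x).2
  have hAP : ∀ x : H, A (P x) = 0 := fun x => (hPmem x).2
  have hQapp : ∀ x : H, Q x = Q₁ x + P (x - Q₁ x) := fun x => rfl
  -- key property : A (x - Q₁ x) ⟂_A S₁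
  have hkey : ∀ (x : H) (t : S₁), (inner ℂ (A x) (t : H) : ℂ) = inner ℂ (A (Q₁ x)) (t : H) := by
    intro x t
    have hproj : π (A (Q₁ x)) = π (A x) := by
      have : π (A (Q₁ x)) = T (T' (π (A x))) := by
        rw [hTapp, hQ₁app]
      rw [this, hTT']
    have h1 : (inner ℂ (A x) (t : H) : ℂ) = inner ℂ (π (A x)) t := by
      rw [Submodule.inner_orthogonalProjectionOnto_eq_of_mem_right]
    have h2 : (inner ℂ (A (Q₁ x)) (t : H) : ℂ) = inner ℂ (π (A (Q₁ x))) t := by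
      rw [Submodule.inner_orthogonalProjectionOnto_eq_of_mem_right]
    rw [h1, h2, hproj]
  -- Q₁ fixes S₁ and kills S₀
  have hQ₁S₁ : ∀ s : S₁, Q₁ (s : H) = s := by
    intro s
    rw [hQ₁app]
    have : π (A (s : H)) = T s := (hTapp s).symm
    rw [this, hT'T]
  have hQ₁S₀ : ∀ s : H, s ∈ S₀ → Q₁ s = 0 := by
    intro s hs
    rw [hQ₁app]
    have hAs : A s = 0 := hs.2
    rw [hAs]
    simp
  -- Q fixes S
  have hQS : ∀ s : H, s ∈ S → Q s = s := by
    intro s hs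
    rw [← hsup] at hs
    obtain ⟨s₀, hs₀, s₁, hs₁, rfl⟩ := Submodule.mem_sup.mp hs
    have hq1 : Q₁ (s₀ + s₁) = s₁ := by
      rw [map_add, hQ₁S₀ s₀ hs₀, hQ₁S₁ ⟨s₁, hs₁⟩, zero_add]
    rw [hQapp, hq1]
    have : s₀ + s₁ - s₁ = s₀ := by abel
    rw [this]
    have hPs₀ : P s₀ = s₀ := by
      rw [hPdef]
      simp only [ContinuousLinearMap.comp_apply, Submodule.subtypeL_apply]
      exact Submodule.starProjection_eq_self_iff.mpr hs₀
    rw [hPs₀]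
    abel
  have hQmem : ∀ x : H, Q x ∈ S := by
    intro x
    rw [hQapp]
    exact S.add_mem (hS₁S (hQ₁mem x)) (hS₀S (hPmem _))
  refine ⟨Q, ?_, ?_, ?_⟩
  · ext x
    exact hQS (Q x) (hQmem x)
  · apply le_antisymm
    · rintro y ⟨x, rfl⟩
      exact hQmem x
    · intro s hs
      exact ⟨s, hQS s hs⟩
  · ext x
    apply ext_inner_right ℂ
    intro y
    have hAQ : A (Q x) = A (Q₁ x) := by
      rw [hQapp, map_add, hAP, add_zero]
    have hrhs : (inner ℂ ((adjoint Q ∘L A) x) y : ℂ) = inner ℂ (A x) (Q y) := by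
      simp only [ContinuousLinearMap.comp_apply]
      rw [adjoint_inner_left]
    simp only [ContinuousLinearMap.comp_apply]
    rw [hAQ, adjoint_inner_left]
    -- goal : ⟪A (Q₁ x), y⟫ = ⟪A x, Q y⟫
    have hPpart : (inner ℂ (A x) (P (y - Q₁ y)) : ℂ) = 0 := by
      rw [hsym, hAP, inner_zero_right]
    have hsplit : (inner ℂ (A x) (Q y) : ℂ) = inner ℂ (A x) (Q₁ y) := by
      rw [hQapp, inner_add_right, hPpart, add_zero]
    rw [hsplit]
    -- ⟪A (Q₁ x), y⟫ = ⟪A x, Q₁ y⟫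
    have h1 : (inner ℂ (A x) (Q₁ y) : ℂ) = inner ℂ (A (Q₁ x)) (Q₁ y) :=
      hkey x ⟨Q₁ y, hQ₁mem y⟩
    have h2 : (inner ℂ (A (Q₁ x)) y : ℂ) = inner ℂ (A (Q₁ x)) (Q₁ y) := by
      have c1 : (inner ℂ (A (Q₁ x)) y : ℂ) = inner ℂ (Q₁ x) (A y) := hsym _ _
      have c2 : (inner ℂ (A y) (Q₁ x) : ℂ) = inner ℂ (A (Q₁ y)) (Q₁ x) :=
        hkey y ⟨Q₁ x, hQ₁mem x⟩
      have c3 : (inner ℂ (Q₁ x) (A y) : ℂ) = inner ℂ (Q₁ x) (A (Q₁ y)) := by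
        rw [← inner_conj_symm, c2, inner_conj_symm]
      rw [c1, c3, ← hsym]
    rw [h2, h1]
end

section
/- Let A ∈ L(H)⁺ and S a closed subspace of H. The pair (A,S) is compatible if and only if the operator equation P A P X = P A (I − P) has a bounded solution, where P = P_S is the orthogonal projection onto S. -/
open ContinuousLinearMap

/-- Key ring identity: if `p` is idempotent and `x`, `x'` satisfy the two (adjoint)
equations, then `q := p + p*x*(1-p)` intertwines `a`. -/
lemma ring_key {R : Type*} [Ring R] (p a x x' : R) (hp : p * p = p)
    (hE : p * a * p * x = p * a * (1 - p))
    (hF : x' * (p * a * p) = (1 - p) * a * p) :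
    a * (p + p * x * (1 - p)) = (p + (1 - p) * x' * p) * a := by
  set q := 1 - p with hqdef
  have hpq : p * q = 0 := by simp [hqdef, mul_sub, hp]
  have hqp : q * p = 0 := by simp [hqdef, sub_mul, hp]
  have hqq : q * q = q := by simp [hqdef, mul_sub, sub_mul, hp]
  set b := p * a * p with hbdef
  have hpb : p * b = b := by rw [hbdef, ← mul_assoc, ← mul_assoc, hp]
  have hbp : b * p = b := by rw [hbdef, mul_assoc, hp]
  have hbq : b * q = 0 := by rw [hbdef, mul_assoc, hpq, mul_zero]
  have hqb : q * b = 0 := by rw [hbdef, ← mul_assoc, ← mul_assoc, hqp, zero_mul, zero_mul]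
  set c := q * a * q with hcdef
  have hpc : p * c = 0 := by rw [hcdef, ← mul_assoc, ← mul_assoc, hpq, zero_mul, zero_mul]
  have hcp : c * p = 0 := by rw [hcdef, mul_assoc, hqp, mul_zero]
  have h1 : p * a * q = b * x * q := by
    rw [hE]; simp only [mul_assoc]; rw [hqq]
  have h2 : q * a * p = q * (x' * b) := by
    rw [hF, ← mul_assoc, ← mul_assoc, hqq]
  have ha : a = b + b * x * q + q * (x' * b) + c := by
    have h0 : a = p * a * p + p * a * q + (q * a * p + q * a * q) := by
      rw [hqdef]; noncomm_ring
    rw [h0, ← hbdef, ← hcdef, h1, h2]; abel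
  have lift : ∀ u v w : R, u * v = w → ∀ z, u * (v * z) = w * z := by
    intro u v w h z; rw [← mul_assoc, h]
  rw [ha]
  simp only [mul_add, add_mul, mul_assoc,
    lift _ _ _ hp, lift _ _ _ hpq, lift _ _ _ hqp, lift _ _ _ hqq,
    lift _ _ _ hpb, lift _ _ _ hbp, lift _ _ _ hbq, lift _ _ _ hqb,
    lift _ _ _ hpc, lift _ _ _ hcp,
    hp, hpq, hqp, hqq, hpb, hbp, hbq, hqb, hpc, hcp,
    zero_mul, mul_zero, add_zero, zero_add]

/-- `p + p*x*(1-p)` is idempotent when `p` is. -/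
lemma ring_key2 {R : Type*} [Ring R] (p x : R) (hp : p * p = p) :
    (p + p * x * (1 - p)) * (p + p * x * (1 - p)) = p + p * x * (1 - p) := by
  set q := 1 - p with hqdef
  have hpq : p * q = 0 := by simp [hqdef, mul_sub, hp]
  have hqp : q * p = 0 := by simp [hqdef, sub_mul, hp]
  have hqq : q * q = q := by simp [hqdef, mul_sub, sub_mul, hp]
  have lift : ∀ u v w : R, u * v = w → ∀ z, u * (v * z) = w * z := by
    intro u v w h z; rw [← mul_assoc, h]
  simp only [mul_add, add_mul, mul_assoc,
    lift _ _ _ hp, lift _ _ _ hpq, lift _ _ _ hqp, lift _ _ _ hqq,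
    hp, hpq, hqp, hqq, zero_mul, mul_zero, add_zero, zero_add]

theorem stmt_11
    {H : Type*} [NormedAddCommGroup H] [InnerProductSpace ℂ H] [CompleteSpace H]
    (A : H →L[ℂ] H) (hA : A.IsPositive)
    (S : Submodule ℂ H) [CompleteSpace S]
    -- `Ps` is the orthogonal projection onto `S`, viewed as an operator on `H`.
    (Ps : H →L[ℂ] H) (hPs : Ps = S.subtypeL ∘L S.orthogonalProjectionOnto) :
    (∃ Q : H →L[ℂ] H, Q ∘L Q = Q ∧ LinearMap.range (Q : H →ₗ[ℂ] H) = S ∧ A ∘L Q = adjoint Q ∘L A) ↔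
    (∃ X : H →L[ℂ] H, (Ps ∘L A ∘L Ps) ∘L X = Ps ∘L A ∘L (1 - Ps)) := by
  have hAadj : adjoint A = A := hA.isSelfAdjoint.adjoint_eq
  have hPadj : adjoint Ps = Ps := by
    rw [hPs]; exact (isSelfAdjoint_starProjection S).adjoint_eq
  have hPstar : star Ps = Ps := by rw [star_eq_adjoint]; exact hPadj
  have hAstar : star A = A := by rw [star_eq_adjoint]; exact hAadj
  have hPmem : ∀ x ∈ S, Ps x = x := by
    intro x hx
    rw [hPs]
    exact (S.starProjection_eq_self_iff).mpr hx
  have hPsub : ∀ x, Ps x ∈ S := by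
    intro x; rw [hPs]; simpa using (S.orthogonalProjectionOnto x).2
  have hP2 : Ps * Ps = Ps := by
    rw [mul_def]; ext x; exact hPmem _ (hPsub x)
  constructor
  · rintro ⟨Q, hQ2, hQr, hQA⟩
    refine ⟨Q ∘L (1 - Ps), ?_⟩
    have hPQ : ∀ y, Ps (Q y) = Q y := fun y =>
      hPmem _ (hQr ▸ LinearMap.mem_range_self (Q : H →ₗ[ℂ] H) y)
    have hQP : Q ∘L Ps = Ps := by
      ext y
      obtain ⟨z, hz⟩ : Ps y ∈ LinearMap.range (Q : H →ₗ[ℂ] H) := hQr.symm ▸ hPsub y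
      simp only [comp_apply]
      rw [← hz, ContinuousLinearMap.coe_coe, ← comp_apply, hQ2]
    have hPQa : ∀ y, Ps (adjoint Q y) = Ps y := by
      have h := congrArg adjoint hQP
      rw [adjoint_comp, hPadj] at h
      intro y
      rw [← comp_apply, h]
    have hQA' : ∀ z, A (Q z) = adjoint Q (A z) := by
      intro z
      have := congrArg (fun T => T z) hQA
      simpa using this
    ext y
    simp only [comp_apply, sub_apply, one_apply]
    rw [hPQ, hQA', hPQa]
  · rintro ⟨X, hX⟩
    have hE : Ps * A * Ps * X = Ps * A * (1 - Ps) := by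
      have h := hX
      simp only [← mul_def] at h
      simp only [mul_assoc] at h ⊢
      exact h
    have hF : adjoint X * (Ps * A * Ps) = (1 - Ps) * A * Ps := by
      have h := congrArg star hE
      simp only [star_mul, star_sub, star_one, hPstar, hAstar, star_eq_adjoint] at h
      simp only [mul_assoc] at h ⊢
      exact h
    refine ⟨Ps + Ps * X * (1 - Ps), ?_, ?_, ?_⟩
    · rw [← mul_def]; exact ring_key2 Ps X hP2
    · have hP2' : ∀ y, Ps (Ps y) = Ps y := by
        intro y; rw [← comp_apply, ← mul_def, hP2]
      have happ : ∀ y, (Ps + Ps * X * (1 - Ps)) y = Ps y + Ps (X (y - Ps y)) := by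
        intro y
        simp [mul_apply, sub_apply, one_apply]
      apply le_antisymm
      · rintro z ⟨y, rfl⟩
        show (Ps + Ps * X * (1 - Ps)) y ∈ S
        rw [happ]
        exact S.add_mem (hPsub y) (hPsub _)
      · intro z hz
        refine ⟨Ps z, ?_⟩
        show (Ps + Ps * X * (1 - Ps)) (Ps z) = z
        rw [happ, hP2' z, sub_self, map_zero, map_zero, add_zero, hPmem z hz]
    · have adjQ : adjoint (Ps + Ps * X * (1 - Ps)) = Ps + (1 - Ps) * adjoint X * Ps := by
        rw [← star_eq_adjoint]
        simp only [star_add, star_mul, star_sub, star_one, hPstar, star_eq_adjoint,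
          mul_assoc]
      rw [← mul_def, ← mul_def, adjQ]
      exact ring_key Ps A X (adjoint X) hP2 hE hF
end

section
/- Let T ∈ L(H,K) and S a closed subspace of H, and set A = T*T. Then the spline set spl(T,S,y) = {x ∈ y + S : ‖Tx‖ ≤ ‖T(y+s)‖ for all s ∈ S} is nonempty for every y ∈ H if and only if the pair (A, S) is compatible. -/
open ContinuousLinearMap

local notation "⟪" x ", " y "⟫" => @inner ℂ _ _ x y

/-- If `x` minimizes `‖T (x + s)‖` over `s ∈ S`, then `T x ⊥ T s` for every `s ∈ S`. -/
lemma min_inner_zero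
    {H K : Type*}
    [NormedAddCommGroup H] [InnerProductSpace ℂ H]
    [NormedAddCommGroup K] [InnerProductSpace ℂ K]
    (T : H →L[ℂ] K) (S : Submodule ℂ H) {x : H}
    (h : ∀ s ∈ S, ‖T x‖ ≤ ‖T (x + s)‖) {s : H} (hs : s ∈ S) :
    ⟪T x, T s⟫ = 0 := by
  by_contra hz
  set z : ℂ := ⟪T x, T s⟫ with hzdef
  have hzpos : 0 < ‖z‖ := norm_pos_iff.mpr hz
  set D : ℝ := ‖T s‖ ^ 2 with hD
  have hD0 : 0 ≤ D := by positivity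
  set t : ℝ := 1 / (D + 1) with ht
  have htpos : 0 < t := by positivity
  have htD : t * (D + 1) = 1 := by
    rw [ht, one_div, inv_mul_cancel₀ (by positivity)]
  set c : ℂ := -(t : ℂ) * starRingEnd ℂ z with hc
  have hcs : c • s ∈ S := S.smul_mem c hs
  have hle := h (c • s) hcs
  have hTe : T (x + c • s) = T x + c • T s := by
    rw [map_add, map_smul]
  rw [hTe] at hle
  have hsq := @norm_add_sq ℂ _ _ _ _ (T x) (c • T s)
  have hinner : ⟪T x, c • T s⟫ = c * z := inner_smul_right _ _ _
  have hre : RCLike.re (⟪T x, c • T s⟫) = -(t * ‖z‖ ^ 2) := by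
    rw [hinner, hc]
    have : -(t : ℂ) * starRingEnd ℂ z * z = -(t : ℂ) * (starRingEnd ℂ z * z) := by ring
    rw [this, RCLike.conj_mul]
    simp [← Complex.ofReal_pow]
  have hnormc : ‖c • T s‖ = (t * ‖z‖) * ‖T s‖ := by
    rw [norm_smul, hc]
    simp [abs_of_pos htpos]
  have hsq' : ‖T x + c • T s‖ ^ 2 =
      ‖T x‖ ^ 2 - 2 * (t * ‖z‖ ^ 2) + (t * ‖z‖) ^ 2 * ‖T s‖ ^ 2 := by
    rw [hsq, hre, hnormc]; ring
  have hle2 : ‖T x‖ ^ 2 ≤ ‖T x + c • T s‖ ^ 2 := by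
    have := norm_nonneg (T x)
    nlinarith [norm_nonneg (T x + c • T s)]
  rw [hsq'] at hle2
  -- so 2 * t * ‖z‖² ≤ t² * ‖z‖² * D, hence 2 ≤ t * D < 1, contradiction
  have hE : 0 < ‖z‖ ^ 2 := pow_pos hzpos 2
  nlinarith [mul_pos htpos hE, mul_pos (mul_pos htpos htpos) hE, htD]

theorem stmt_12
    {H K : Type*}
    [NormedAddCommGroup H] [InnerProductSpace ℂ H] [CompleteSpace H]
    [NormedAddCommGroup K] [InnerProductSpace ℂ K] [CompleteSpace K]
    (T : H →L[ℂ] K) (S : Submodule ℂ H) (hS : IsClosed (S : Set H)) :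
    (∀ y : H,
      {x : H | (∃ s ∈ S, x = y + s) ∧ ∀ s ∈ S, ‖T x‖ ≤ ‖T (y + s)‖}.Nonempty) ↔
    (∃ Q : H →L[ℂ] H, Q ∘L Q = Q ∧ LinearMap.range (Q : H →ₗ[ℂ] H) = S ∧
      (adjoint T ∘L T) ∘L Q = adjoint Q ∘L (adjoint T ∘L T)) := by
  set A : H →L[ℂ] H := adjoint T ∘L T with hAdef
  have hA : ∀ u v : H, ⟪A u, v⟫ = ⟪T u, T v⟫ := by
    intro u v
    simp [hAdef, adjoint_inner_left]
  have hA' : ∀ u v : H, ⟪u, A v⟫ = ⟪T u, T v⟫ := by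
    intro u v
    simp [hAdef, adjoint_inner_right]
  constructor
  · -- splines exist → compatible
    intro hspl
    set N : Submodule ℂ H := Sᗮ.comap (A : H →ₗ[ℂ] H) with hNdef
    have hmemN : ∀ x : H, x ∈ N ↔ A x ∈ Sᗮ := fun x => Iff.rfl
    have hNclosed : IsClosed (N : Set H) := by
      have : (N : Set H) = A ⁻¹' (Sᗮ : Set H) := rfl
      rw [this]
      exact S.isClosed_orthogonal.preimage A.continuous
    set M : Submodule ℂ H := S ⊓ N with hMdef
    have hMclosed : IsClosed (M : Set H) := by
      have : (M : Set H) = (S : Set H) ∩ (N : Set H) := rfl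
      rw [this]; exact hS.inter hNclosed
    haveI : CompleteSpace M := hMclosed.completeSpace_coe
    set N' : Submodule ℂ H := N ⊓ Mᗮ with hN'def
    have hN'closed : IsClosed (N' : Set H) := by
      have : (N' : Set H) = (N : Set H) ∩ (Mᗮ : Set H) := rfl
      rw [this]; exact hNclosed.inter M.isClosed_orthogonal
    -- every spline for y witnesses y ∈ S ⊔ N'
    have hcompl : IsCompl S N' := by
      constructor
      · rw [Submodule.disjoint_def]
        intro x hxS hxN'
        have hxM : x ∈ M := ⟨hxS, hxN'.1⟩
        have := hxN'.2 x hxM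
        exact inner_self_eq_zero.mp this
      · rw [codisjoint_iff, Submodule.eq_top_iff']
        intro y
        obtain ⟨x, ⟨⟨s₀, hs₀, hxy⟩, hmin⟩⟩ := hspl y
        have hminx : ∀ s ∈ S, ‖T x‖ ≤ ‖T (x + s)‖ := by
          intro s hsmem
          have := hmin (s₀ + s) (S.add_mem hs₀ hsmem)
          have hx : x + s = y + (s₀ + s) := by rw [hxy]; abel
          rwa [hx]
        have hxN : x ∈ N := by
          rw [hmemN, Submodule.mem_orthogonal]
          intro u hu
          have h1 : ⟪T x, T u⟫ = 0 := min_inner_zero T S hminx hu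
          have h2 : ⟪u, A x⟫ = starRingEnd ℂ ⟪A x, u⟫ := (inner_conj_symm _ _).symm
          rw [h2, hA, h1, map_zero]
        obtain ⟨p, hp, q, hq, hxpq⟩ := M.exists_add_mem_mem_orthogonal x
        have hqN : q ∈ N := by
          have : q = x - p := by rw [hxpq]; abel
          rw [this]
          exact N.sub_mem hxN hp.2
        have hy : y = (p - s₀) + q := by
          have : y = x - s₀ := by rw [hxy]; abel
          rw [this, hxpq]; abel
        rw [Submodule.mem_sup]
        exact ⟨p - s₀, S.sub_mem hp.1 hs₀, q, ⟨hqN, hq⟩, hy.symm⟩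
    -- the bounded projection
    set P := S.linearProjOfClosedCompl N' hcompl hS hN'closed with hPdef
    have hPapp : ∀ u : H, (P u : H) = (S.linearProjOfIsCompl N' hcompl u : H) := by
      intro u
      have := Submodule.coe_continuous_linearProjOfClosedCompl hcompl hS hN'closed
      exact congrArg _ (LinearMap.congr_fun this u)
    set Q : H →L[ℂ] H := S.subtypeL ∘L P with hQdef
    have hQapp : ∀ u : H, Q u = (S.linearProjOfIsCompl N' hcompl u : H) := by
      intro u; exact hPapp u
    have hQmem : ∀ u : H, Q u ∈ S := by
      intro u; rw [hQapp]; exact Subtype.coe_prop _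
    have hQleft : ∀ u : H, u ∈ S → Q u = u := by
      intro u hu
      rw [hQapp]
      exact congrArg _ (Submodule.linearProjOfIsCompl_apply_left hcompl ⟨u, hu⟩)
    have hQker : ∀ u : H, u - Q u ∈ N' := by
      intro u
      rw [← Submodule.linearProjOfIsCompl_apply_eq_zero_iff (h := hcompl)]
      have : S.linearProjOfIsCompl N' hcompl (u - Q u) =
          S.linearProjOfIsCompl N' hcompl u - S.linearProjOfIsCompl N' hcompl (Q u) :=
        map_sub _ _ _
      rw [show S.projectionOnto N' hcompl (u - Q u) = S.linearProjOfIsCompl N' hcompl (u - Q u) from rfl, this]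
      have h2 : S.linearProjOfIsCompl N' hcompl (Q u) = S.linearProjOfIsCompl N' hcompl u := by
        have hmem := hQmem u
        have := Submodule.linearProjOfIsCompl_apply_left hcompl ⟨Q u, hmem⟩
        rw [show S.linearProjOfIsCompl N' hcompl (Q u) = S.projectionOnto N' hcompl ((⟨Q u, hmem⟩ : S) : H) from rfl, this]
        apply Subtype.ext
        exact (hQapp u).symm
      rw [h2, sub_self]
    refine ⟨Q, ?_, ?_, ?_⟩
    · ext u
      exact hQleft (Q u) (hQmem u)
    · apply le_antisymm
      · rintro _ ⟨u, rfl⟩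
        exact hQmem u
      · intro u hu
        exact ⟨u, hQleft u hu⟩
    · -- A Q = Q* A
      have key : ∀ u v : H, u ∈ S → v ∈ N → ⟪T u, T v⟫ = 0 := by
        intro u v hu hv
        rw [← hA']
        exact ((hmemN v).mp hv) u hu
      apply ContinuousLinearMap.ext
      intro x
      apply ext_inner_right ℂ
      intro y
      simp only [ContinuousLinearMap.comp_apply]
      rw [adjoint_inner_left]
      -- goal : ⟪A (Q x), y⟫ = ⟪A x, Q y⟫
      have hy : T y = T (Q y) + T (y - Q y) := by rw [← map_add]; congr 1; abel
      have hx : T x = T (Q x) + T (x - Q x) := by rw [← map_add]; congr 1; abel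
      rw [hA, hA, hy, hx, inner_add_right, inner_add_left]
      have h1 : ⟪T (Q x), T (y - Q y)⟫ = 0 := key _ _ (hQmem x) (hQker y).1
      have h2 : ⟪T (x - Q x), T (Q y)⟫ = 0 := by
        rw [← inner_conj_symm]
        rw [key _ _ (hQmem y) (hQker x).1, map_zero]
      rw [h1, h2, add_zero]
  · -- compatible → splines exist
    rintro ⟨Q, hQQ, hrange, hAQ⟩ y
    have hQy : Q y ∈ S := by rw [← hrange]; exact ⟨y, rfl⟩
    refine ⟨y - Q y, ⟨⟨-(Q y), S.neg_mem hQy, by abel⟩, ?_⟩⟩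
    intro s hs
    set x : H := y - Q y with hx
    have hts : Q y + s ∈ S := S.add_mem hQy hs
    have hys : y + s = x + (Q y + s) := by rw [hx]; abel
    -- orthogonality ⟪T x, T t⟫ = 0 for t ∈ S
    have horth : ⟪T x, T (Q y + s)⟫ = 0 := by
      obtain ⟨u, hu⟩ : ∃ u, Q u = Q y + s := by
        rw [← hrange] at hts; exact hts
      rw [← hu, ← hA']
      have hAQu : A (Q u) = adjoint Q (A u) := by
        have := ContinuousLinearMap.ext_iff.mp hAQ u
        simpa using this
      rw [hAQu, adjoint_inner_right]
      have hQx : Q x = 0 := by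
        have h2 : Q (Q y) = Q y := by
          have := ContinuousLinearMap.ext_iff.mp hQQ y
          simpa using this
        rw [hx, map_sub, h2, sub_self]
      rw [hQx, inner_zero_left]
    have hTe : T (x + (Q y + s)) = T x + T (Q y + s) := map_add _ _ _
    rw [hys, hTe]
    have hsq := @norm_add_sq ℂ _ _ _ _ (T x) (T (Q y + s))
    rw [horth] at hsq
    simp only [map_zero, mul_zero, add_zero] at hsq
    nlinarith [norm_nonneg (T x), norm_nonneg (T x + T (Q y + s)),
      sq_nonneg (‖T (Q y + s)‖), norm_nonneg (T (Q y + s))]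
end

section
/- Let B ∈ L(H,K) have closed range and A ∈ L(K)⁺. For every y ∈ K there exists u ∈ H with ‖Bu − y‖_A ≤ ‖Bx − y‖_A for all x ∈ H if and only if the pair (A, R(B)) is compatible. -/
open ContinuousLinearMap

private lemma sa_swap {K : Type*} [NormedAddCommGroup K] [InnerProductSpace ℂ K]
    [CompleteSpace K] {A : K →L[ℂ] K} (hA : IsSelfAdjoint A) (x y : K) :
    (inner ℂ (A x) y : ℂ) = inner ℂ x (A y) := by
  conv_lhs => rw [← hA.adjoint_eq]
  exact ContinuousLinearMap.adjoint_inner_left A y x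

private lemma min_inner_eq_zero {K : Type*} [NormedAddCommGroup K] [InnerProductSpace ℂ K]
    [CompleteSpace K] {A : K →L[ℂ] K} (hA : A.IsPositive) (d s : K)
    (h : ∀ c : ℂ, (inner ℂ (A d) d : ℂ).re ≤ (inner ℂ (A (d + c • s)) (d + c • s) : ℂ).re) :
    (inner ℂ (A d) s : ℂ) = 0 := by
  set w : ℂ := inner ℂ (A d) s with hw
  have hsd : (inner ℂ (A s) d : ℂ) = starRingEnd ℂ w := by
    rw [sa_swap hA.isSelfAdjoint, ← inner_conj_symm]
  have expand : ∀ c : ℂ, (inner ℂ (A (d + c • s)) (d + c • s) : ℂ)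
      = inner ℂ (A d) d + c * w + (starRingEnd ℂ c) * (starRingEnd ℂ w)
        + (starRingEnd ℂ c) * c * inner ℂ (A s) s := by
    intro c
    simp only [map_add, map_smul, inner_add_left, inner_add_right, inner_smul_left,
      inner_smul_right, hsd, ← hw]
    ring
  have hq0 : 0 ≤ (inner ℂ (A s) s : ℂ).re := by
    simpa using hA.re_inner_nonneg_left s
  have key : ∀ t : ℝ, 0 ≤ 2 * (t * Complex.normSq w)
      + (t ^ 2 * Complex.normSq w) * (inner ℂ (A s) s : ℂ).re := by
    intro t
    have h1 := h ((t : ℂ) * starRingEnd ℂ w)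
    rw [expand] at h1
    have hcw : ((t : ℂ) * starRingEnd ℂ w) * w = ((t * Complex.normSq w : ℝ) : ℂ) := by
      push_cast
      rw [mul_assoc, mul_comm (starRingEnd ℂ w) w, Complex.mul_conj]
    have hcc : (starRingEnd ℂ ((t : ℂ) * starRingEnd ℂ w)) * ((t : ℂ) * starRingEnd ℂ w)
        = ((t ^ 2 * Complex.normSq w : ℝ) : ℂ) := by
      rw [← Complex.normSq_eq_conj_mul_self, Complex.normSq_mul, Complex.normSq_conj,
        Complex.normSq_ofReal]
      push_cast
      ring
    have hconj : (starRingEnd ℂ ((t : ℂ) * starRingEnd ℂ w)) * (starRingEnd ℂ w)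
        = starRingEnd ℂ (((t : ℂ) * starRingEnd ℂ w) * w) :=
      (map_mul (starRingEnd ℂ) _ _).symm
    rw [hconj, hcw, hcc, Complex.conj_ofReal] at h1
    rw [Complex.add_re, Complex.add_re, Complex.add_re, Complex.ofReal_re,
      Complex.re_ofReal_mul] at h1
    linarith
  have ha0 : Complex.normSq w ≤ 0 := by
    set q : ℝ := (inner ℂ (A s) s : ℂ).re
    set a : ℝ := Complex.normSq w with ha
    have hqp : (0:ℝ) < q + 1 := by linarith
    have h3 := mul_nonneg (key (-(1 / (q + 1)))) (sq_nonneg (q + 1))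
    have h4 : (2 * (-(1 / (q + 1)) * a) + ((-(1 / (q + 1))) ^ 2 * a) * q) * (q + 1) ^ 2
        = -(a * (q + 2)) := by
      field_simp
      ring
    rw [h4] at h3
    nlinarith
  have : Complex.normSq w = 0 := le_antisymm ha0 (Complex.normSq_nonneg w)
  exact Complex.normSq_eq_zero.mp this

theorem stmt_14
    {H K : Type*}
    [NormedAddCommGroup H] [InnerProductSpace ℂ H] [CompleteSpace H]
    [NormedAddCommGroup K] [InnerProductSpace ℂ K] [CompleteSpace K]
    (B : H →L[ℂ] K) (hB : IsClosed (LinearMap.range (B : H →ₗ[ℂ] K) : Set K))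
    (A : K →L[ℂ] K) (hA : A.IsPositive) :
    (∀ y : K, ∃ u : H, ∀ x : H,
        (inner ℂ (A (B u - y)) (B u - y) : ℂ).re ≤ (inner ℂ (A (B x - y)) (B x - y) : ℂ).re) ↔
    (∃ P : K →L[ℂ] K, P ∘L P = P ∧ LinearMap.range (P : K →ₗ[ℂ] K) = LinearMap.range (B : H →ₗ[ℂ] K) ∧
      A ∘L P = adjoint P ∘L A) := by
  constructor
  · intro h
    set S : Submodule ℂ K := LinearMap.range (B : H →ₗ[ℂ] K) with hS
    have hSc : IsClosed (S : Set K) := hB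
    set N : Submodule ℂ K := Sᗮ.comap (A : K →ₗ[ℂ] K) with hN
    have hNmem : ∀ z : K, z ∈ N ↔ A z ∈ Sᗮ := by
      intro z
      simp [hN, Submodule.mem_comap]
    have hNc : IsClosed (N : Set K) := by
      have : (N : Set K) = A ⁻¹' (Sᗮ : Set K) := rfl
      rw [this]
      exact (Submodule.isClosed_orthogonal S).preimage A.continuous
    set M : Submodule ℂ K := S ⊓ N with hM
    have hMc : IsClosed (M : Set K) := by
      have : (M : Set K) = (S : Set K) ∩ (N : Set K) := rfl
      rw [this]
      exact hSc.inter hNc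
    haveI : CompleteSpace M := hMc.completeSpace_coe
    set N₁ : Submodule ℂ K := N ⊓ Mᗮ with hN₁
    have hN₁c : IsClosed (N₁ : Set K) := by
      have : (N₁ : Set K) = (N : Set K) ∩ (Mᗮ : Set K) := rfl
      rw [this]
      exact hNc.inter (Submodule.isClosed_orthogonal M)
    -- Step 1: every y decomposes as B u + n with n ∈ N
    have step1 : ∀ y : K, ∃ u : H, y - B u ∈ N := by
      intro y
      obtain ⟨u, hu⟩ := h y
      refine ⟨u, ?_⟩
      rw [hNmem, Submodule.mem_orthogonal]
      intro sv hsv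
      obtain ⟨v, rfl⟩ := hsv
      have hc : ∀ c : ℂ, (inner ℂ (A (B u - y)) (B u - y) : ℂ).re
          ≤ (inner ℂ (A ((B u - y) + c • B v)) ((B u - y) + c • B v) : ℂ).re := by
        intro c
        have := hu (u + c • v)
        have heq : B (u + c • v) - y = (B u - y) + c • B v := by
          rw [map_add, map_smul, add_sub_right_comm]
        rwa [heq] at this
      have w0 : (inner ℂ (A (B u - y)) (B v) : ℂ) = 0 := min_inner_eq_zero hA _ _ hc
      have : A (y - B u) = -A (B u - y) := by
        rw [← map_neg]
        congr 1
        abel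
      rw [this, inner_neg_right, ← inner_conj_symm, ContinuousLinearMap.coe_coe, w0]
      simp
    -- IsCompl S N₁
    have hMS : M ≤ S := inf_le_left
    have hMN : M ≤ N := inf_le_right
    have hdisj : Disjoint S N₁ := by
      rw [Submodule.disjoint_def]
      intro x hxS hxN₁
      have hxM : x ∈ M := ⟨hxS, hxN₁.1⟩
      have hxMp : x ∈ Mᗮ := hxN₁.2
      have : (inner ℂ x x : ℂ) = 0 := (Submodule.mem_orthogonal M x).mp hxMp x hxM
      exact inner_self_eq_zero.mp this
    have hcodisj : Codisjoint S N₁ := by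
      rw [codisjoint_iff, eq_top_iff]
      intro y _
      obtain ⟨u, hn⟩ := step1 y
      set n : K := y - B u with hn'
      set m : K := (M.orthogonalProjectionOnto n : K) with hm
      have hmM : m ∈ M := (M.orthogonalProjectionOnto n).2
      have hsub : n - m ∈ Mᗮ := Submodule.sub_starProjection_mem_orthogonal (K := M) n
      have hsubN : n - m ∈ N := N.sub_mem hn (hMN hmM)
      refine Submodule.mem_sup.mpr ⟨B u + m, S.add_mem (LinearMap.mem_range_self _ u) (hMS hmM),
        n - m, ⟨hsubN, hsub⟩, ?_⟩
      rw [hn']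
      abel
    have hcompl : IsCompl S N₁ := ⟨hdisj, hcodisj⟩
    -- the projection
    set proj := S.linearProjOfClosedCompl N₁ hcompl hSc hN₁c with hproj
    set P : K →L[ℂ] K := S.subtypeL ∘L proj with hP
    have hPapply : ∀ x : K, P x = (S.linearProjOfIsCompl N₁ hcompl x : K) := by
      intro x
      simp [hP, hproj, Submodule.coe_continuous_linearProjOfClosedCompl']
      rfl
    have hPmem : ∀ x : K, P x ∈ S := by
      intro x
      rw [hPapply]
      exact (S.linearProjOfIsCompl N₁ hcompl x).2
    have hPfix : ∀ z ∈ S, P z = z := by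
      intro z hz
      rw [hPapply]
      exact congrArg Subtype.val (Submodule.linearProjOfIsCompl_apply_left hcompl ⟨z, hz⟩)
    have hker : ∀ x : K, x - P x ∈ N₁ := by
      intro x
      rw [← Submodule.linearProjOfIsCompl_apply_eq_zero_iff (h := hcompl)]
      rw [map_sub]
      have : S.linearProjOfIsCompl N₁ hcompl (P x)
          = S.linearProjOfIsCompl N₁ hcompl x := by
        rw [hPapply]
        exact Submodule.linearProjOfIsCompl_apply_left hcompl _
      exact sub_eq_zero.mpr this.symm
    have hAorth : ∀ z : K, A (z - P z) ∈ Sᗮ := fun z => (hNmem _).mp (hker z).1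
    refine ⟨P, ?_, ?_, ?_⟩
    · ext x
      exact hPfix (P x) (hPmem x)
    · apply le_antisymm
      · rintro z ⟨x, rfl⟩
        exact hPmem x
      · intro z hz
        exact ⟨z, hPfix z hz⟩
    · ext x
      apply ext_inner_right ℂ
      intro v
      have lhs1 : (inner ℂ (A (P x)) v : ℂ) = inner ℂ (A (P x)) (P v) := by
        have h0 : (inner ℂ (A (P x)) (v - P v) : ℂ) = 0 := by
          rw [sa_swap hA.isSelfAdjoint]
          exact (Submodule.mem_orthogonal S _).mp (hAorth v) _ (hPmem x)
        rw [inner_sub_right] at h0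
        linear_combination h0
      have rhs1 : (inner ℂ ((adjoint P ∘L A) x) v : ℂ) = inner ℂ (A (P x)) (P v) := by
        rw [ContinuousLinearMap.comp_apply, ContinuousLinearMap.adjoint_inner_left]
        have h0 : (inner ℂ (A (x - P x)) (P v) : ℂ) = 0 := by
          rw [← inner_conj_symm]
          have := (Submodule.mem_orthogonal S _).mp (hAorth x) _ (hPmem v)
          rw [this]
          simp
        rw [map_sub, inner_sub_left] at h0
        linear_combination h0
      rw [ContinuousLinearMap.comp_apply, lhs1, rhs1]
  · rintro ⟨P, hP2, hPr, hPA⟩ y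
    have hfix : ∀ z ∈ LinearMap.range (P : K →ₗ[ℂ] K), P z = z := by
      rintro z ⟨a, rfl⟩
      exact DFunLike.congr_fun hP2 a
    have hPy : P y ∈ LinearMap.range (B : H →ₗ[ℂ] K) := hPr ▸ LinearMap.mem_range_self (P : K →ₗ[ℂ] K) y
    obtain ⟨u, hu : B u = P y⟩ := hPy
    refine ⟨u, fun x => ?_⟩
    set d : K := B u - y with hd
    set s : K := B x - P y with hs
    have hsrange : s ∈ LinearMap.range (P : K →ₗ[ℂ] K) := by
      rw [hPr, hs, ← hu]
      exact ⟨x - u, by rw [map_sub]; rfl⟩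
    have hPd : P d = 0 := by
      rw [hd, hu, map_sub, hfix (P y) (LinearMap.mem_range_self (P : K →ₗ[ℂ] K) y), sub_self]
    have hAd_s : (inner ℂ (A d) s : ℂ) = 0 := by
      have h1 : (inner ℂ (A d) (P s) : ℂ) = inner ℂ (adjoint P (A d)) s :=
        (ContinuousLinearMap.adjoint_inner_left P s (A d)).symm
      have h2 : adjoint P (A d) = 0 := by
        have : adjoint P (A d) = (adjoint P ∘L A) d := rfl
        rw [this, ← hPA, ContinuousLinearMap.comp_apply, hPd, map_zero]
      rw [← hfix s hsrange, h1, h2, inner_zero_left]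
    have hAs_d : (inner ℂ (A s) d : ℂ) = 0 := by
      rw [sa_swap hA.isSelfAdjoint, ← inner_conj_symm, hAd_s]
      simp
    have heq : B x - y = s + d := by
      rw [hs, hd, hu]
      abel
    rw [heq]
    have expand : (inner ℂ (A (s + d)) (s + d) : ℂ)
        = inner ℂ (A s) s + inner ℂ (A d) d := by
      rw [map_add, inner_add_left, inner_add_right, inner_add_right, hAs_d, hAd_s]
      ring
    rw [expand, Complex.add_re]
    have h2 : 0 ≤ (inner ℂ (A s) s : ℂ).re := by
      simpa using hA.re_inner_nonneg_left s
    linarith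
end

section
/- Let B ∈ L(H,K) have closed range and A ∈ L(K)⁺ with N(A) ∩ R(B) = {0} and (A, R(B)) compatible. Then u ∈ H is an A-least squares solution of Bx = y if and only if B*A(Bu − y) = 0 (the weighted normal equations). -/
open ContinuousLinearMap

private lemma expand_aux
    {K : Type*} [NormedAddCommGroup K] [InnerProductSpace ℂ K] [CompleteSpace K]
    (A : K →L[ℂ] K) (hsa : adjoint A = A) (v z : K) :
    (inner ℂ (A (v + z)) (v + z) : ℂ).re =
      (inner ℂ (A v) v : ℂ).re + 2 * (inner ℂ (A v) z : ℂ).re + (inner ℂ (A z) z : ℂ).re := by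
  have hz : (inner ℂ (A z) v : ℂ).re = (inner ℂ (A v) z : ℂ).re := by
    rw [← adjoint_inner_right, hsa, ← inner_conj_symm (A v) z, Complex.conj_re]
  rw [map_add, inner_add_left, inner_add_right, inner_add_right]
  simp only [Complex.add_re]
  rw [hz]
  ring

theorem stmt_16
    {H K : Type*}
    [NormedAddCommGroup H] [InnerProductSpace ℂ H] [CompleteSpace H]
    [NormedAddCommGroup K] [InnerProductSpace ℂ K] [CompleteSpace K]
    (B : H →L[ℂ] K) (hB : IsClosed (LinearMap.range (B : H →ₗ[ℂ] K) : Set K))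
    (A : K →L[ℂ] K) (hA : A.IsPositive)
    (hdisj : LinearMap.ker (A : K →ₗ[ℂ] K) ⊓ LinearMap.range (B : H →ₗ[ℂ] K) = ⊥)
    (hcompat : ∃ P : K →L[ℂ] K, P ∘L P = P ∧ LinearMap.range (P : K →ₗ[ℂ] K) = LinearMap.range (B : H →ₗ[ℂ] K) ∧
      A ∘L P = adjoint P ∘L A)
    (y : K) (u : H) :
    (∀ x : H,
        (inner ℂ (A (B u - y)) (B u - y) : ℂ).re ≤ (inner ℂ (A (B x - y)) (B x - y) : ℂ).re) ↔
    adjoint B (A (B u - y)) = 0 := by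
  have hsa : adjoint A = A := isSelfAdjoint_iff'.mp hA.isSelfAdjoint
  set v : K := B u - y with hv
  constructor
  · intro hmin
    have key : ∀ h : H, (inner ℂ (A v) (B h) : ℂ) = 0 := by
      intro h
      set w : K := B h with hw
      set b : ℂ := inner ℂ (A v) w with hb
      set a : ℝ := (inner ℂ (A w) w : ℂ).re with ha'
      have ha : 0 ≤ a := hA.re_inner_nonneg_left w
      have hineq : ∀ c : ℂ, 0 ≤ 2 * (c * b).re + Complex.normSq c * a := by
        intro c
        have h1 := hmin (u + c • h)
        have h2 : B (u + c • h) - y = v + c • w := by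
          simp [hv, hw]
          abel
        rw [h2, expand_aux A hsa] at h1
        have h3 : (inner ℂ (A v) (c • w) : ℂ) = c * b := by
          rw [inner_smul_right, hb]
        have h4 : (inner ℂ (A (c • w)) (c • w) : ℂ).re = Complex.normSq c * a := by
          rw [map_smul, inner_smul_left, inner_smul_right, ← mul_assoc,
            ← Complex.normSq_eq_conj_mul_self, Complex.re_ofReal_mul]
        rw [h3, h4] at h1
        linarith
      set t : ℝ := (a + 1)⁻¹ with ht'
      have ht : 0 < t := by positivity
      have hta : t * (a + 1) = 1 := inv_mul_cancel₀ (by linarith)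
      have := hineq (-(t : ℂ) * starRingEnd ℂ b)
      have e1 : ((-(t : ℂ) * starRingEnd ℂ b) * b).re = -t * Complex.normSq b := by
        rw [mul_assoc]
        rw [show (starRingEnd ℂ b) * b = (Complex.normSq b : ℂ) by
          rw [mul_comm, Complex.mul_conj]]
        simp
      have e2 : Complex.normSq (-(t : ℂ) * starRingEnd ℂ b) = t ^ 2 * Complex.normSq b := by
        rw [Complex.normSq_mul, Complex.normSq_neg, Complex.normSq_conj,
          Complex.normSq_ofReal]
        ring
      rw [e1, e2] at this
      have hbsq : Complex.normSq b = 0 := by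
        by_contra hne
        have hs : 0 < Complex.normSq b :=
          lt_of_le_of_ne (Complex.normSq_nonneg b) (Ne.symm hne)
        have hta2 : t * a = 1 - t := by linear_combination hta
        have key2 : t ^ 2 * Complex.normSq b * a = (1 - t) * (t * Complex.normSq b) := by
          linear_combination (t * Complex.normSq b) * hta2
        have hp : 0 < t * Complex.normSq b := mul_pos ht hs
        have hp2 : 0 < t * (t * Complex.normSq b) := mul_pos ht hp
        nlinarith [this, key2, hp, hp2]
      have : b = 0 := by
        rwa [Complex.normSq_eq_zero] at hbsq
      rw [hb] at this
      exact this
    refine ext_inner_right ℂ fun h => ?_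
    rw [adjoint_inner_left]
    simp [key h]
  · intro h0 x
    have h2 : B x - y = v + B (x - u) := by
      rw [map_sub, hv]
      abel
    rw [h2, expand_aux A hsa]
    have h3 : (inner ℂ (A v) (B (x - u)) : ℂ) = 0 := by
      rw [← adjoint_inner_left, h0, inner_zero_left]
    have h4 : 0 ≤ (inner ℂ (A (B (x - u))) (B (x - u)) : ℂ).re := hA.re_inner_nonneg_left _
    rw [h3]
    simp only [Complex.zero_re, mul_zero, add_zero]
    linarith [h4]
end
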